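/- arXiv:1010.0729 — 5 statements merged into one kernel-verified Lean document; each statement's English description precedes it below -/
import Mathlib

section
/- Let I ⊆ ℂ[z₁,…,z_d] and J ⊆ ℂ[z₁,…,z_{d'}] be homogeneous ideals, and set Z(I) = V(I) ∩ closed unit ball of ℂ^d and Z(J) = V(J) ∩ closed unit ball of ℂ^{d'}. If A : ℂ^{d'} → ℂ^d is a ℂ-linear map that carries Z(J) bijectively onto Z(I) (i.e., A(Z(J)) = Z(I) and A restricted to Z(J) is injective), then A is isometric on V(J): ‖A z‖ = ‖z‖ for every z ∈ V(J). -/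
open MvPolynomial Metric

noncomputable section

/-- `Cd d` is ℂ^d with the Euclidean (Hermitian) norm. -/
abbrev Cd (d : ℕ) := EuclideanSpace ℂ (Fin d)

/-- The zero locus `V(I)` of an ideal of polynomials. -/
def VI {d : ℕ} (I : Ideal (MvPolynomial (Fin d) ℂ)) : Set (Cd d) :=
  {z | ∀ p ∈ I, eval (fun i => z i) p = 0}

/-- `Z(I) = V(I) ∩ closed unit ball`. -/
def ZI {d : ℕ} (I : Ideal (MvPolynomial (Fin d) ℂ)) : Set (Cd d) :=
  VI I ∩ Metric.closedBall 0 1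

/-- An ideal is homogeneous if it contains the homogeneous components of each of
its elements. -/
def IsHomogeneousIdeal {d : ℕ} (I : Ideal (MvPolynomial (Fin d) ℂ)) : Prop :=
  ∀ p ∈ I, ∀ n : ℕ, homogeneousComponent n p ∈ I

lemma eval_smul_homog {σ : Type*} [Fintype σ] {p : MvPolynomial σ ℂ} {n : ℕ}
    (hp : p.IsHomogeneous n) (c : ℂ) (x : σ → ℂ) :
    eval (fun i => c * x i) p = c ^ n * eval x p := by
  rw [eval_eq', eval_eq', Finset.mul_sum]
  refine Finset.sum_congr rfl fun s hs => ?_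
  have hd : ∑ i, s i = n := by
    have h1 := hp (mem_support_iff.mp hs)
    rw [← h1, Finsupp.weight_apply, Finsupp.sum_fintype]
    · simp
    · simp
  simp_rw [mul_pow]
  rw [Finset.prod_mul_distrib, Finset.prod_pow_eq_pow_sum, hd]
  ring

lemma VI_smul {d : ℕ} {J : Ideal (MvPolynomial (Fin d) ℂ)} (hJ : IsHomogeneousIdeal J)
    {z : Cd d} (hz : z ∈ VI J) (c : ℂ) : c • z ∈ VI J := by
  intro p hp
  have hfun : (fun i => (c • z) i) = fun i => c * z i := by
    funext i; simp
  rw [hfun]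
  conv_lhs => rw [← sum_homogeneousComponent p]
  rw [map_sum]
  refine Finset.sum_eq_zero fun n _ => ?_
  rw [eval_smul_homog (homogeneousComponent_isHomogeneous n p) c _,
    hz _ (hJ p hp n), mul_zero]

/-- If a linear map `A : ℂ^{d'} → ℂ^d` carries `Z(J)` bijectively
onto `Z(I)` for homogeneous ideals `I`, `J`, then `A` is isometric on `V(J)`. -/
theorem stmt2 {d d' : ℕ} (I : Ideal (MvPolynomial (Fin d) ℂ))
    (J : Ideal (MvPolynomial (Fin d') ℂ))
    (hI : IsHomogeneousIdeal I) (hJ : IsHomogeneousIdeal J)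
    (A : Cd d' →ₗ[ℂ] Cd d)
    (hsurj : A '' ZI J = ZI I) (hinj : Set.InjOn A (ZI J)) :
    ∀ z ∈ VI J, ‖A z‖ = ‖z‖ := by
  have key : ∀ u, u ∈ VI J → ‖u‖ = 1 → ‖A u‖ = 1 := by
    intro u hu hu1
    have huZ : u ∈ ZI J := ⟨hu, by simp [mem_closedBall, hu1]⟩
    have hAuZ : A u ∈ ZI I := hsurj ▸ ⟨u, huZ, rfl⟩
    have h0J : (0 : Cd d') ∈ ZI J :=
      ⟨by simpa using VI_smul hJ hu 0, by simp⟩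
    have hAu0 : A u ≠ 0 := by
      intro h
      have hu0 : u = 0 := hinj huZ h0J (by simp [h])
      rw [hu0] at hu1; simp at hu1
    have hr1 : ‖A u‖ ≤ 1 := by simpa [mem_closedBall] using hAuZ.2
    by_contra hne
    have hrlt : ‖A u‖ < 1 := lt_of_le_of_ne hr1 hne
    set r := ‖A u‖ with hrdef
    have hrpos : 0 < r := norm_pos_iff.mpr hAu0
    have hw : ((r : ℂ)⁻¹) • A u ∈ ZI I := by
      refine ⟨VI_smul hI hAuZ.1 _, ?_⟩
      simp only [mem_closedBall, dist_zero_right, norm_smul, norm_inv,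
        Complex.norm_real, Real.norm_eq_abs, abs_of_pos hrpos]
      rw [inv_mul_cancel₀ hrpos.ne']
    rw [← hsurj] at hw
    obtain ⟨v, hvZ, hAv⟩ := hw
    have hnv : ‖v‖ ≤ 1 := by simpa [mem_closedBall] using hvZ.2
    have hrvZ : (r : ℂ) • v ∈ ZI J := by
      refine ⟨VI_smul hJ hvZ.1 _, ?_⟩
      simp only [mem_closedBall, dist_zero_right, norm_smul,
        Complex.norm_real, Real.norm_eq_abs, abs_of_pos hrpos]
      nlinarith
    have hArv : A ((r : ℂ) • v) = A u := by
      rw [map_smul, hAv, smul_smul, mul_inv_cancel₀ (by exact_mod_cast hrpos.ne'), one_smul]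
    have heq : (r : ℂ) • v = u := hinj hrvZ huZ hArv
    have : (1 : ℝ) ≤ r := by
      have h2 : ‖(r : ℂ) • v‖ = 1 := by rw [heq, hu1]
      rw [norm_smul, Complex.norm_real, Real.norm_eq_abs, abs_of_pos hrpos] at h2
      nlinarith
    linarith
  intro z hz
  rcases eq_or_ne z 0 with rfl | hz0
  · simp
  have hnz : (0 : ℝ) < ‖z‖ := norm_pos_iff.mpr hz0
  set u : Cd d' := ((‖z‖ : ℂ)⁻¹) • z with hu_def
  have hu : u ∈ VI J := VI_smul hJ hz _
  have hu1 : ‖u‖ = 1 := by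
    rw [hu_def, norm_smul, norm_inv, Complex.norm_real, Real.norm_eq_abs,
      abs_of_pos hnz, inv_mul_cancel₀ hnz.ne']
  have hz_eq : z = (‖z‖ : ℂ) • u := by
    rw [hu_def, smul_smul, mul_inv_cancel₀ (by exact_mod_cast hnz.ne'), one_smul]
  calc ‖A z‖ = ‖A ((‖z‖ : ℂ) • u)‖ := by rw [← hz_eq]
    _ = ‖z‖ * ‖A u‖ := by
        rw [map_smul, norm_smul, Complex.norm_real, Real.norm_eq_abs, abs_of_pos hnz]
    _ = ‖z‖ := by rw [key u hu hu1, mul_one]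
end
end

section
/- Let I be a homogeneous ideal in ℂ[z₁,…,z_d] and set Z(I) = V(I) ∩ closed unit ball of ℂ^d. Let F : ℂ^d → ℂ^d be continuous on the closed unit ball and holomorphic on the open unit ball, such that F restricted to Z(I) is a bijection of Z(I) onto itself. If F(0) = 0 and for every z ∈ Z(I) the derivative at t = 0 of the map t ↦ F(t z) (t ∈ ℂ, |t| < 1) equals z, then F(z) = z for all z ∈ Z(I). -/
open MvPolynomial Metric

noncomputable section

/-- Evaluating a homogeneous polynomial at a scaled point. -/
lemma hom_eval_smul {d n : ℕ} {p : MvPolynomial (Fin d) ℂ} (hp : p.IsHomogeneous n)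
    (c : ℂ) (z : Fin d → ℂ) :
    eval (fun i => c * z i) p = c ^ n * eval z p := by
  rw [eval_eq', eval_eq', Finset.mul_sum]
  refine Finset.sum_congr rfl fun u hu => ?_
  have hn : ∑ i, u i = n := by
    have h1 := hp (mem_support_iff.mp hu)
    rw [Finsupp.weight_apply] at h1
    rw [← h1, Finsupp.sum]
    rw [Finset.sum_subset (Finset.subset_univ u.support)]
    · simp
    · intro i _ hi
      simp [Finsupp.notMem_support_iff.mp hi]
  calc p.coeff u * ∏ i, (c * z i) ^ u i
      = p.coeff u * ((∏ i, c ^ u i) * ∏ i, z i ^ u i) := by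
        rw [← Finset.prod_mul_distrib]; simp [mul_pow]
    _ = c ^ n * (p.coeff u * ∏ i, z i ^ u i) := by
        rw [Finset.prod_pow_eq_pow_sum, hn]; ring

/-- The variety of a homogeneous ideal is a cone. -/
lemma smul_mem_VI {d : ℕ} {I : Ideal (MvPolynomial (Fin d) ℂ)}
    (hI : IsHomogeneousIdeal I) {z : Cd d} (hz : z ∈ VI I) (c : ℂ) : c • z ∈ VI I := by
  intro p hp
  conv_lhs => rw [← sum_homogeneousComponent p]
  rw [map_sum]
  refine Finset.sum_eq_zero fun n _ => ?_
  have : (fun i => (c • z) i) = fun i => c * z i := rfl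
  rw [this, hom_eval_smul (homogeneousComponent_isHomogeneous n p) c,
    hz _ (hI p hp n), mul_zero]

lemma smul_mem_ZI {d : ℕ} {I : Ideal (MvPolynomial (Fin d) ℂ)}
    (hI : IsHomogeneousIdeal I) {z : Cd d} (hz : z ∈ ZI I) {c : ℂ} (hc : ‖c‖ ≤ 1) :
    c • z ∈ ZI I := by
  refine ⟨smul_mem_VI hI hz.1 c, ?_⟩
  rw [mem_closedBall_zero_iff, norm_smul]
  have := mem_closedBall_zero_iff.mp hz.2
  calc ‖c‖ * ‖z‖ ≤ 1 * 1 := mul_le_mul hc this (norm_nonneg _) zero_le_one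
    _ = 1 := one_mul 1

/-- Core Schwarz-type argument: if `t ↦ F (t • z)` maps the unit disc into the closed
unit ball, vanishes at `0`, and has derivative `z` (a unit vector) at `0`, then it is
`t ↦ t • z` on the open disc. -/
lemma core_schwarz {d : ℕ} {F : Cd d → Cd d}
    (hFh : DifferentiableOn ℂ F (Metric.ball 0 1)) (hF0 : F 0 = 0)
    {z : Cd d} (hz1 : ‖z‖ = 1)
    (hin : ∀ t : ℂ, ‖t‖ < 1 → ‖F (t • z)‖ ≤ 1)
    (hd : HasDerivAt (fun t : ℂ => F (t • z)) z 0) :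
    ∀ t : ℂ, ‖t‖ < 1 → F (t • z) = t • z := by
  set g := fun t : ℂ => F (t • z) with hg
  have hsm : Set.MapsTo (fun t : ℂ => t • z) (ball 0 1) (ball (0 : Cd d) 1) := by
    intro t ht
    rw [mem_ball_zero_iff] at ht ⊢
    rw [norm_smul, hz1, mul_one]; exact ht
  have gdiff : DifferentiableOn ℂ g (ball 0 1) :=
    hFh.comp ((differentiable_id.smul_const z).differentiableOn) hsm
  have g0 : g 0 = 0 := by simp [hg, hF0]
  have hle : ∀ t ∈ ball (0:ℂ) 1, ‖g t‖ ≤ 1 := fun t ht =>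
    hin t (mem_ball_zero_iff.mp ht)
  have hmaps : Set.MapsTo g (ball 0 1) (ball (g 0) 1) := by
    rw [g0]
    intro t ht
    rw [mem_ball_zero_iff]
    rcases lt_or_eq_of_le (hle t ht) with h | h
    · exact h
    · exfalso
      have hmax : IsMaxOn (norm ∘ g) (ball 0 1) t := fun s hs => by
        simp only [Function.comp_apply, h]; exact hle s hs
      have heq := Complex.eqOn_of_isPreconnected_of_isMaxOn_norm
        (convex_ball (0:ℂ) 1).isPreconnected isOpen_ball gdiff ht hmax
      have h0 := heq (mem_ball_self one_pos)
      simp only [Function.const_apply] at h0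
      rw [g0] at h0
      rw [← h0, norm_zero] at h
      norm_num at h
  have hds : dslope g 0 0 = z := by rw [dslope_same]; exact hd.deriv
  have key := Complex.affine_of_mapsTo_ball_of_exists_norm_dslope_eq_div gdiff
    (hmaps.mono_right ball_subset_closedBall)
    (mem_ball_self one_pos) (by rw [hds, hz1]; norm_num)
  intro t ht
  have h2 := key (mem_ball_zero_iff.mpr ht)
  simp only [g0, sub_zero, zero_add] at h2
  show g t = t • z
  rw [h2, hds]

/-- a Cartan-type uniqueness theorem. Let `F` be continuous on the
closed unit ball, holomorphic on the open unit ball, restricting to a bijection of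
`Z(I)` onto itself.  If `F(0) = 0` and for every `z ∈ Z(I)` the map `t ↦ F(t z)`
has derivative `z` at `t = 0`, then `F` is the identity on `Z(I)`. -/
theorem stmt4 {d : ℕ} (I : Ideal (MvPolynomial (Fin d) ℂ))
    (hI : IsHomogeneousIdeal I)
    (F : Cd d → Cd d)
    (hFc : ContinuousOn F (Metric.closedBall 0 1))
    (hFh : DifferentiableOn ℂ F (Metric.ball 0 1))
    (hFbij : Set.BijOn F (ZI I) (ZI I))
    (hF0 : F 0 = 0)
    (hderiv : ∀ z ∈ ZI I, HasDerivAt (fun t : ℂ => F (t • z)) z 0) :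
    ∀ z ∈ ZI I, F z = z := by
  intro z hz
  rcases eq_or_ne z 0 with rfl | hz0
  · exact hF0
  · set r : ℝ := ‖z‖ with hr
    have hr0 : 0 < r := norm_pos_iff.mpr hz0
    have hr1 : r ≤ 1 := mem_closedBall_zero_iff.mp hz.2
    set w : Cd d := ((r : ℂ))⁻¹ • z with hw
    have hrc0 : ((r : ℂ)) ≠ 0 := by
      simpa using hr0.ne'
    have hw1 : ‖w‖ = 1 := by
      rw [hw, norm_smul, norm_inv, Complex.norm_real, Real.norm_eq_abs,
        abs_of_pos hr0, ← hr, inv_mul_cancel₀ hr0.ne']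
    have hwZ : w ∈ ZI I := ⟨smul_mem_VI hI hz.1 _, by
      rw [mem_closedBall_zero_iff, hw1]⟩
    have hin : ∀ t : ℂ, ‖t‖ < 1 → ‖F (t • w)‖ ≤ 1 := fun t ht =>
      mem_closedBall_zero_iff.mp (hFbij.mapsTo (smul_mem_ZI hI hwZ ht.le)).2
    have hcore := core_schwarz hFh hF0 hw1 hin (hderiv w hwZ)
    rcases lt_or_eq_of_le hr1 with h | h
    · -- interior case: plug in t = r
      have ht : ‖((r : ℂ))‖ < 1 := by
        rw [Complex.norm_real, Real.norm_eq_abs, abs_of_pos hr0]; exact h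
      have := hcore ((r : ℂ)) ht
      rwa [hw, smul_smul, mul_inv_cancel₀ hrc0, one_smul] at this
    · -- boundary case: take a limit t → 1
      have hrc1 : ((r : ℂ)) = 1 := by rw [h, Complex.ofReal_one]
      have hwz : w = z := by
        show ((r : ℂ))⁻¹ • z = z
        rw [hrc1, inv_one, one_smul]
      rw [hwz] at hcore
      set u : ℕ → Cd d := fun n => (((1 - 1 / (n + 1) : ℝ) : ℂ)) • z with hu
      have htn : ∀ n : ℕ, 0 ≤ 1 - 1 / ((n : ℝ) + 1) ∧ 1 - 1 / ((n : ℝ) + 1) < 1 := by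
        intro n
        have h1 : 0 < 1 / ((n : ℝ) + 1) := by positivity
        have h2 : 1 / ((n : ℝ) + 1) ≤ 1 := by
          rw [div_le_one (by positivity)]; linarith [Nat.cast_nonneg (α := ℝ) n]
        constructor <;> linarith
      have hnorm : ∀ n : ℕ, ‖(((1 - 1 / (n + 1) : ℝ) : ℂ))‖ < 1 := by
        intro n
        rw [Complex.norm_real, Real.norm_eq_abs, abs_of_nonneg (htn n).1]
        exact (htn n).2
      have hFu : ∀ n, F (u n) = u n := fun n => hcore _ (hnorm n)
      have hmem : ∀ n, u n ∈ Metric.closedBall (0 : Cd d) 1 := by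
        intro n
        rw [mem_closedBall_zero_iff, hu]
        calc ‖(((1 - 1 / (n + 1) : ℝ) : ℂ)) • z‖ = ‖(((1 - 1 / (n + 1) : ℝ) : ℂ))‖ * ‖z‖ :=
              norm_smul _ _
          _ ≤ 1 * 1 := mul_le_mul (hnorm n).le hr1 (norm_nonneg _) zero_le_one
          _ = 1 := one_mul 1
      have hlim : Filter.Tendsto u Filter.atTop (nhds z) := by
        have h1 : Filter.Tendsto (fun n : ℕ => (1 - 1 / ((n : ℝ) + 1))) Filter.atTop
            (nhds 1) := by
          have h0 := tendsto_one_div_add_atTop_nhds_zero_nat (𝕜 := ℝ)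
          have := Filter.Tendsto.const_sub (1 : ℝ) h0
          simpa using this
        have h2 : Filter.Tendsto (fun n : ℕ => (((1 - 1 / ((n : ℝ) + 1)) : ℝ) : ℂ))
            Filter.atTop (nhds (((1 : ℝ) : ℂ))) :=
          (Complex.continuous_ofReal.tendsto 1).comp h1
        have h3 := h2.smul_const z
        rw [hu]
        simpa using h3
      have hlim' : Filter.Tendsto u Filter.atTop (nhdsWithin z (Metric.closedBall 0 1)) :=
        tendsto_nhdsWithin_of_tendsto_nhds_of_eventually_within u hlim
          (Filter.Eventually.of_forall hmem)
      have hFz : Filter.Tendsto (fun n => F (u n)) Filter.atTop (nhds (F z)) :=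
        (hFc z hz.2).tendsto.comp hlim'
      have hFz' : Filter.Tendsto (fun n => F (u n)) Filter.atTop (nhds z) :=
        hlim.congr fun n => (hFu n).symm
      exact tendsto_nhds_unique hFz hFz'
end
end

section
/- Let H be a complex Hilbert space, let k ≥ 1, and let V₁,…,V_k be closed subspaces of H whose orthogonal projections P_{V_i} satisfy ‖P_{V_i} ∘ P_{V_j}‖ ≤ 1/(2k) for all i ≠ j. Then for any choice of vectors x_i ∈ V_i (i = 1,…,k), one has (1/2)·Σ_{i=1}^k ‖x_i‖² ≤ ‖Σ_{i=1}^k x_i‖² ≤ (3/2)·Σ_{i=1}^k ‖x_i‖². -/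
noncomputable section

/-- The orthogonal projection onto a closed subspace `K` of a Hilbert space,
viewed as an operator from `H` to itself. -/
def projOf {H : Type*} [NormedAddCommGroup H] [InnerProductSpace ℂ H] [CompleteSpace H]
    (K : Submodule ℂ H) (hK : IsClosed (K : Set H)) : H →L[ℂ] H :=
  haveI : CompleteSpace K := hK.completeSpace_coe
  K.subtypeL.comp (K.orthogonalProjectionOnto)

open scoped InnerProductSpace

lemma inner_bound {H : Type*} [NormedAddCommGroup H] [InnerProductSpace ℂ H] [CompleteSpace H]
    {K L : Submodule ℂ H} (hK : IsClosed (K : Set H)) (hL : IsClosed (L : Set H))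
    {u v : H} (hu : u ∈ K) (hv : v ∈ L) :
    ‖⟪u, v⟫_ℂ‖ ≤ ‖(projOf K hK).comp (projOf L hL)‖ * (‖u‖ * ‖v‖) := by
  haveI : CompleteSpace K := hK.completeSpace_coe
  haveI : CompleteSpace L := hL.completeSpace_coe
  have hvL : ((L.orthogonalProjectionOnto v : H)) = v := L.starProjection_eq_self_iff.mpr hv
  have huK : ((K.orthogonalProjectionOnto u : H)) = u := K.starProjection_eq_self_iff.mpr hu
  have key : ⟪u, v⟫_ℂ = ⟪u, ((projOf K hK).comp (projOf L hL)) v⟫_ℂ := by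
    have : ((projOf K hK).comp (projOf L hL)) v
        = (K.orthogonalProjectionOnto v : H) := by
      simp [projOf, hvL]
    have h := K.inner_starProjection_left_eq_right u v
    rw [show K.starProjection u = u from huK] at h
    rw [this]; exact h
  calc ‖⟪u, v⟫_ℂ‖ = ‖⟪u, ((projOf K hK).comp (projOf L hL)) v⟫_ℂ‖ := by rw [key]
    _ ≤ ‖u‖ * ‖((projOf K hK).comp (projOf L hL)) v‖ := norm_inner_le_norm _ _
    _ ≤ ‖u‖ * (‖(projOf K hK).comp (projOf L hL)‖ * ‖v‖) := by
        gcongr; exact ((projOf K hK).comp (projOf L hL)).le_opNorm v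
    _ = ‖(projOf K hK).comp (projOf L hL)‖ * (‖u‖ * ‖v‖) := by ring

/-- If `V₁, …, V_k` (`k ≥ 1`) are closed subspaces of a complex
Hilbert space whose orthogonal projections satisfy `‖P_i P_j‖ ≤ 1/(2k)` for `i ≠ j`,
then for all `xᵢ ∈ Vᵢ`:
`(1/2) Σ ‖xᵢ‖² ≤ ‖Σ xᵢ‖² ≤ (3/2) Σ ‖xᵢ‖²`. -/
theorem stmt5 {H : Type*} [NormedAddCommGroup H] [InnerProductSpace ℂ H] [CompleteSpace H]
    {k : ℕ} (hk : 1 ≤ k) (V : Fin k → Submodule ℂ H)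
    (hVc : ∀ i, IsClosed ((V i) : Set H))
    (hproj : ∀ i j, i ≠ j →
      ‖(projOf (V i) (hVc i)).comp (projOf (V j) (hVc j))‖ ≤ 1 / (2 * k))
    (x : Fin k → H) (hx : ∀ i, x i ∈ V i) :
    (1 / 2 : ℝ) * ∑ i, ‖x i‖ ^ 2 ≤ ‖∑ i, x i‖ ^ 2 ∧
      ‖∑ i, x i‖ ^ 2 ≤ (3 / 2 : ℝ) * ∑ i, ‖x i‖ ^ 2 := by
  classical
  set A : ℝ := ∑ i, ‖x i‖ ^ 2 with hA
  have hkpos : (0 : ℝ) < k := by exact_mod_cast hk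
  -- expansion of the square norm
  have expand : ‖∑ i, x i‖ ^ 2
      = ∑ i, ∑ j, (RCLike.re (⟪x i, x j⟫_ℂ) : ℝ) := by
    rw [← inner_self_eq_norm_sq (𝕜 := ℂ)]
    rw [sum_inner]
    rw [map_sum]
    congr 1
    ext i
    rw [inner_sum, map_sum]
  set E : ℝ := ∑ i, ∑ j ∈ Finset.univ.erase i, (RCLike.re (⟪x i, x j⟫_ℂ) : ℝ) with hE
  have split : ‖∑ i, x i‖ ^ 2 = A + E := by
    rw [expand, hA, hE, ← Finset.sum_add_distrib]
    congr 1
    ext i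
    rw [← Finset.add_sum_erase _ _ (Finset.mem_univ i)]
    congr 1
    exact inner_self_eq_norm_sq (x i)
  -- bound the cross terms
  have hEbound : |E| ≤ A / 2 := by
    have h1 : |E| ≤ ∑ i, ∑ j ∈ Finset.univ.erase i,
        (1 / (2 * k)) * (‖x i‖ * ‖x j‖) := by
      refine (Finset.abs_sum_le_sum_abs _ _).trans ?_
      refine Finset.sum_le_sum fun i _ => ?_
      refine (Finset.abs_sum_le_sum_abs _ _).trans ?_
      refine Finset.sum_le_sum fun j hj => ?_
      have hij : i ≠ j := fun h => (Finset.mem_erase.mp hj).1 h.symm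
      have := inner_bound (hVc i) (hVc j) (hx i) (hx j)
      calc |RCLike.re (⟪x i, x j⟫_ℂ)| ≤ ‖⟪x i, x j⟫_ℂ‖ := RCLike.abs_re_le_norm _
        _ ≤ ‖(projOf (V i) (hVc i)).comp (projOf (V j) (hVc j))‖ * (‖x i‖ * ‖x j‖) := this
        _ ≤ (1 / (2 * k)) * (‖x i‖ * ‖x j‖) := by
            apply mul_le_mul_of_nonneg_right (hproj i j hij) (by positivity)
    have h2 : ∑ i, ∑ j ∈ Finset.univ.erase i, (1 / (2 * k)) * (‖x i‖ * ‖x j‖)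
        ≤ (1 / (2 * k)) * (∑ i, ‖x i‖) ^ 2 := by
      have : ∀ i : Fin k, ∑ j ∈ Finset.univ.erase i, (1 / (2 * k)) * (‖x i‖ * ‖x j‖)
          ≤ ∑ j, (1 / (2 * k)) * (‖x i‖ * ‖x j‖) := by
        intro i
        refine Finset.sum_le_sum_of_subset_of_nonneg (Finset.erase_subset _ _)
          fun j _ _ => by positivity
      refine (Finset.sum_le_sum fun i _ => this i).trans (le_of_eq ?_)
      rw [sq, Finset.sum_mul_sum, Finset.mul_sum]
      simp [Finset.mul_sum]

    have h3 : (∑ i, ‖x i‖) ^ 2 ≤ k * A := by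
      have := sq_sum_le_card_mul_sum_sq (s := (Finset.univ : Finset (Fin k)))
        (f := fun i => ‖x i‖)
      simpa [hA] using this
    have h4 : (1 / (2 * k)) * (∑ i, ‖x i‖) ^ 2 ≤ (1 / (2 * (k : ℝ))) * (k * A) := by
      apply mul_le_mul_of_nonneg_left h3 (by positivity)
    have h5 : (1 / (2 * (k : ℝ))) * (k * A) = A / 2 := by
      field_simp
    linarith
  have := abs_le.mp hEbound
  constructor <;> rw [split] <;> linarith
end
end

section
/- Let B be the ball algebra on the closed unit ball of ℂ^d, and let J ⊆ B be a closed homogeneous ideal. Then √J = {f ∈ B : f(z) = 0 for all z ∈ V_Ω(J)}, where V_Ω(J) = {z in the open unit ball 𝔹_d : g(z) = 0 for all g ∈ J} and √J = {f ∈ B : f^n ∈ J for some n ≥ 1}. -/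
open MvPolynomial Metric

noncomputable section

abbrev CBall (d : ℕ) : Set (Cd d) := Metric.closedBall (0 : Cd d) 1

instance (d : ℕ) : CompactSpace (CBall d) :=
  isCompact_iff_compactSpace.mp (isCompact_closedBall _ _)

/-- The `i`-th coordinate function on the closed unit ball. -/
def coordFn (d : ℕ) (i : Fin d) : C(CBall d, ℂ) :=
  ⟨fun z => (z : Cd d) i, by first | fun_prop | exact (EuclideanSpace.proj (𝕜 := ℂ) i).continuous.comp continuous_subtype_val⟩

/-- Restriction of a polynomial to the closed unit ball, as an element of
`C(closedBall, ℂ)`. -/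
def polyMap (d : ℕ) : MvPolynomial (Fin d) ℂ →ₐ[ℂ] C(CBall d, ℂ) :=
  aeval (coordFn d)

/-- The ball algebra: the closure, in the Banach algebra of continuous functions on
the closed unit ball of ℂ^d with the supremum norm, of the restrictions of
polynomials. -/
def ballAlg (d : ℕ) : Set C(CBall d, ℂ) := closure (Set.range (polyMap d))

/-- `J` is an ideal of the ball algebra `B`. -/
def IsIdealOfBallAlg (d : ℕ) (J : Set C(CBall d, ℂ)) : Prop :=
  J ⊆ ballAlg d ∧ (0 : C(CBall d, ℂ)) ∈ J ∧
    (∀ f ∈ J, ∀ g ∈ J, f + g ∈ J) ∧ (∀ f ∈ J, ∀ g ∈ ballAlg d, g * f ∈ J)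

/-- The self-map of the closed ball given by `z ↦ t z` for `‖t‖ ≤ 1`. -/
def dilatePt (d : ℕ) (t : ℂ) (ht : ‖t‖ ≤ 1) : C(CBall d, CBall d) :=
  ⟨fun z => ⟨t • (z : Cd d), by
      have hz : ‖(z : Cd d)‖ ≤ 1 := mem_closedBall_zero_iff.mp z.2
      show t • (z : Cd d) ∈ Metric.closedBall 0 1
      rw [mem_closedBall_zero_iff, norm_smul]
      exact mul_le_one₀ ht (norm_nonneg _) hz⟩,
    by exact Continuous.subtype_mk (continuous_subtype_val.const_smul t) _⟩

/-- The dilation `f ↦ (z ↦ f (t z))` on continuous functions on the closed ball. -/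
def dilateFn (d : ℕ) (t : ℂ) (ht : ‖t‖ ≤ 1) (f : C(CBall d, ℂ)) : C(CBall d, ℂ) :=
  f.comp (dilatePt d t ht)

/-- A closed ideal of the ball algebra is homogeneous if it is invariant under all
dilations `z ↦ t z`, `|t| < 1`. -/
def IsHomogBallIdeal (d : ℕ) (J : Set C(CBall d, ℂ)) : Prop :=
  ∀ f ∈ J, ∀ t : ℂ, ∀ ht : ‖t‖ < 1, dilateFn d t ht.le f ∈ J

/-- `V_Ω(J)`: the points of the open unit ball where all members of `J` vanish,
viewed as points of the closed ball. -/
def VOmega (d : ℕ) (J : Set C(CBall d, ℂ)) : Set (CBall d) :=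
  {z | ‖(z : Cd d)‖ < 1 ∧ ∀ g ∈ J, g z = 0}

namespace Stmt10
open Finset intervalIntegral MeasureTheory Filter Topology Complex

variable {d : ℕ}

lemma polyMap_apply (p : MvPolynomial (Fin d) ℂ) (z : CBall d) :
    polyMap d p z = eval (fun i => (z : Cd d) i) p := by
  have h2 := congrFun (congrArg DFunLike.coe
    (MvPolynomial.comp_aeval (coordFn d) (ContinuousMap.evalAlgHom ℂ ℂ z))) p
  simp only [AlgHom.coe_comp, Function.comp_apply] at h2
  have : (ContinuousMap.evalAlgHom ℂ ℂ z) (polyMap d p) = polyMap d p z := rfl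
  rw [← this, show polyMap d = aeval (coordFn d) from rfl, h2]
  rfl


lemma dilateFn_apply (t : ℂ) (ht : ‖t‖ ≤ 1) (f : C(CBall d, ℂ)) (z : CBall d) :
    dilateFn d t ht f z = f (dilatePt d t ht z) := rfl

lemma norm_dilateFn_le (t : ℂ) (ht : ‖t‖ ≤ 1) (f : C(CBall d, ℂ)) :
    ‖dilateFn d t ht f‖ ≤ ‖f‖ := by
  refine ContinuousMap.norm_le _ (norm_nonneg f) |>.mpr fun z => ?_
  exact f.norm_coe_le_norm _

lemma dilateFn_one (f : C(CBall d, ℂ)) :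
    dilateFn d 1 (by norm_num) f = f := by
  ext z
  rw [dilateFn_apply]
  congr 1
  exact Subtype.ext (one_smul ℂ (z : Cd d))

/-- The dilation family as a continuous map from the closed disc. -/
def dilateCM (f : C(CBall d, ℂ)) : C({t : ℂ // ‖t‖ ≤ 1}, C(CBall d, ℂ)) :=
  ContinuousMap.curry (f.comp
    ⟨fun q => ⟨q.1.1 • (q.2 : Cd d), by
        have hz : ‖(q.2 : Cd d)‖ ≤ 1 := mem_closedBall_zero_iff.mp q.2.2
        show q.1.1 • (q.2 : Cd d) ∈ Metric.closedBall 0 1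
        rw [mem_closedBall_zero_iff, norm_smul]
        exact mul_le_one₀ q.1.2 (norm_nonneg _) hz⟩,
      by
        refine Continuous.subtype_mk ?_ _
        exact (continuous_subtype_val.comp continuous_fst).smul
          (continuous_subtype_val.comp continuous_snd)⟩)

lemma dilateCM_apply (f : C(CBall d, ℂ)) (t : ℂ) (ht : ‖t‖ ≤ 1) :
    dilateCM f ⟨t, ht⟩ = dilateFn d t ht f := by
  ext z; rfl

/-- If a closed set contains all proper dilates of `f`, it contains `f`. -/
lemma mem_of_dilates {C : Set C(CBall d, ℂ)} (hC : IsClosed C) (f : C(CBall d, ℂ))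
    (h : ∀ t : ℂ, ∀ ht : ‖t‖ < 1, dilateFn d t ht.le f ∈ C) : f ∈ C := by
  have hlt : ∀ n : ℕ, ‖(1 - 1/(n+1) : ℝ) • (1:ℂ)‖ < 1 := by
    intro n
    rw [norm_smul, norm_one, mul_one, Real.norm_eq_abs]
    have h01 : (0:ℝ) ≤ 1 - 1/(n+1) := by
      have hn : (0:ℝ) < n+1 := by positivity
      have : (1:ℝ)/(n+1) ≤ 1 := by
        rw [div_le_one hn]
        linarith [Nat.cast_nonneg (α := ℝ) n]
      linarith
    rw [_root_.abs_of_nonneg h01]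
    have : (0:ℝ) < 1/(n+1) := by positivity
    linarith
  have htend : Tendsto (fun n : ℕ => (⟨(1 - 1/(n+1) : ℝ) • (1:ℂ), (hlt n).le⟩ :
      {t : ℂ // ‖t‖ ≤ 1})) atTop (𝓝 ⟨1, by norm_num⟩) := by
    rw [tendsto_subtype_rng]
    have h1 : Tendsto (fun n : ℕ => (1 - 1/(n+1) : ℝ)) atTop (𝓝 1) := by
      have := tendsto_one_div_add_atTop_nhds_zero_nat (𝕜 := ℝ)
      have := this.const_sub 1
      simpa using this.congr (fun n => by push_cast; ring)
    have := (h1.smul_const (1:ℂ))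
    simpa using this
  have := ((dilateCM f).continuous.tendsto _).comp htend
  rw [dilateCM_apply, dilateFn_one] at this
  refine hC.mem_of_tendsto this (Filter.Eventually.of_forall fun n => ?_)
  show dilateCM f ⟨_, (hlt n).le⟩ ∈ C
  rw [dilateCM_apply]
  exact h _ (hlt n)
lemma isHomog_eval_smul {p : MvPolynomial (Fin d) ℂ} {n : ℕ} (hp : p.IsHomogeneous n)
    (t : ℂ) (x : Fin d → ℂ) : eval (fun i => t * x i) p = t ^ n * eval x p := by
  rw [eval_eq', eval_eq', Finset.mul_sum]
  refine Finset.sum_congr rfl fun u hu => ?_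
  have hdeg : ∑ i, u i = n := by
    have := hp (mem_support_iff.mp hu)
    rw [← this]
    rw [show ((Finsupp.weight 1) u : ℕ) = u.sum fun _ e => e by
      simp [Finsupp.weight_apply, Finsupp.sum, mul_one]]
    rw [Finsupp.sum_fintype]
    simp
  calc p.coeff u * ∏ i, (t * x i) ^ u i
      = p.coeff u * ((∏ i, t ^ u i) * ∏ i, x i ^ u i) := by
        rw [← Finset.prod_mul_distrib]; simp [mul_pow]
    _ = t ^ n * (p.coeff u * ∏ i, x i ^ u i) := by
        rw [Finset.prod_pow_eq_pow_sum, hdeg]; ring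
lemma smul_coord (t : ℂ) (z : CBall d) (ht : ‖t‖ ≤ 1) (i : Fin d) :
    ((dilatePt d t ht z : CBall d) : Cd d) i = t * (z : Cd d) i := rfl

lemma dilateFn_polyMap (t : ℂ) (ht : ‖t‖ ≤ 1) (p : MvPolynomial (Fin d) ℂ) :
    dilateFn d t ht (polyMap d p) =
      polyMap d (∑ m ∈ Finset.range (p.totalDegree + 1), t ^ m • homogeneousComponent m p) := by
  ext z
  rw [dilateFn_apply, polyMap_apply, polyMap_apply, map_sum]
  have : (fun i => ((dilatePt d t ht z : CBall d) : Cd d) i) = fun i => t * (z : Cd d) i := rfl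
  rw [this]
  conv_lhs => rw [← sum_homogeneousComponent p]
  rw [map_sum]
  refine Finset.sum_congr rfl fun m _ => ?_
  rw [isHomog_eval_smul (homogeneousComponent_isHomogeneous m p), smul_eval]
lemma norm_expI (θ : ℝ) : ‖Complex.exp (θ * Complex.I)‖ = 1 := by
  simpa using Complex.abs_exp_ofReal_mul_I θ

/-- The integrand for the `k`-th homogeneous component. -/
def hIntegrand (f : C(CBall d, ℂ)) (k : ℕ) (θ : ℝ) : C(CBall d, ℂ) :=
  Complex.exp (-(k : ℂ) * θ * Complex.I) •
    dilateFn d (Complex.exp (θ * Complex.I)) (norm_expI θ).le f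

lemma continuous_hIntegrand (f : C(CBall d, ℂ)) (k : ℕ) :
    Continuous (hIntegrand (d := d) f k) := by
  have h1 : Continuous fun θ : ℝ => Complex.exp (-(k : ℂ) * θ * Complex.I) := by
    fun_prop
  have h2 : Continuous fun θ : ℝ =>
      dilateFn d (Complex.exp (θ * Complex.I)) (norm_expI θ).le f := by
    have : Continuous fun θ : ℝ => (⟨Complex.exp (θ * Complex.I), (norm_expI θ).le⟩ :
        {t : ℂ // ‖t‖ ≤ 1}) := by
      refine Continuous.subtype_mk ?_ _
      fun_prop
    have := (dilateCM f).continuous.comp this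
    convert this using 1
    funext θ
    exact (dilateCM_apply f _ _).symm
  exact h1.smul h2

lemma intervalIntegrable_hIntegrand (f : C(CBall d, ℂ)) (k : ℕ) (a b : ℝ) :
    IntervalIntegrable (hIntegrand (d := d) f k) MeasureTheory.volume a b :=
  (continuous_hIntegrand f k).intervalIntegrable a b

/-- The `k`-th homogeneous component of `f`, via a circle average. -/
def hcomp (f : C(CBall d, ℂ)) (k : ℕ) : C(CBall d, ℂ) :=
  (2 * Real.pi)⁻¹ • ∫ θ in (0:ℝ)..(2 * Real.pi), hIntegrand f k θ

lemma norm_hIntegrand_le (f : C(CBall d, ℂ)) (k : ℕ) (θ : ℝ) :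
    ‖hIntegrand (d := d) f k θ‖ ≤ ‖f‖ := by
  rw [hIntegrand, norm_smul]
  have h1 : ‖Complex.exp (-(k : ℂ) * θ * Complex.I)‖ = 1 := by
    have : (-(k : ℂ) * θ * Complex.I) = ((-(k : ℝ) * θ : ℝ) : ℂ) * Complex.I := by
      push_cast; ring
    rw [this]
    exact norm_expI _
  rw [h1, one_mul]
  exact norm_dilateFn_le _ _ _

lemma norm_hcomp_le (f : C(CBall d, ℂ)) (k : ℕ) : ‖hcomp f k‖ ≤ ‖f‖ := by
  rw [hcomp, norm_smul]
  have h2 : ‖∫ θ in (0:ℝ)..(2 * Real.pi), hIntegrand f k θ‖ ≤ ‖f‖ * |2 * Real.pi - 0| :=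
    intervalIntegral.norm_integral_le_of_norm_le_const fun θ _ => norm_hIntegrand_le f k θ
  have hpi : (0:ℝ) < 2 * Real.pi := by positivity
  calc ‖(2 * Real.pi)⁻¹‖ * ‖∫ θ in (0:ℝ)..(2 * Real.pi), hIntegrand f k θ‖
      ≤ (2 * Real.pi)⁻¹ * (‖f‖ * |2 * Real.pi - 0|) := by
        rw [Real.norm_eq_abs, _root_.abs_of_nonneg (by positivity)]
        exact mul_le_mul_of_nonneg_left h2 (by positivity)
    _ = ‖f‖ := by
        rw [sub_zero, _root_.abs_of_nonneg hpi.le]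
        field_simp

lemma hIntegrand_sub (f g : C(CBall d, ℂ)) (k : ℕ) (θ : ℝ) :
    hIntegrand (f - g) k θ = hIntegrand f k θ - hIntegrand g k θ := by
  ext z
  simp [hIntegrand, dilateFn_apply, mul_sub]

lemma hcomp_sub (f g : C(CBall d, ℂ)) (k : ℕ) :
    hcomp (f - g) k = hcomp f k - hcomp g k := by
  rw [hcomp, hcomp, hcomp, ← smul_sub, ← intervalIntegral.integral_sub
    (intervalIntegrable_hIntegrand f k _ _) (intervalIntegrable_hIntegrand g k _ _)]
  congr 1
  apply intervalIntegral.integral_congr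
  intro θ _
  exact hIntegrand_sub f g k θ

lemma lipschitz_hcomp (k : ℕ) : LipschitzWith 1 (fun f : C(CBall d, ℂ) => hcomp f k) := by
  refine LipschitzWith.of_dist_le_mul fun f g => ?_
  rw [NNReal.coe_one, one_mul, dist_eq_norm, dist_eq_norm, ← hcomp_sub]
  exact norm_hcomp_le _ _
lemma integral_expI (n : ℤ) : (∫ θ in (0:ℝ)..(2 * Real.pi), Complex.exp ((n:ℂ) * θ * Complex.I))
    = if n = 0 then ((2 * Real.pi : ℝ) : ℂ) else 0 := by
  split_ifs with h
  · subst h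
    simp only [Int.cast_zero, zero_mul]
    rw [intervalIntegral.integral_congr (g := fun _ => (1:ℂ))
      (by intro θ _; simp)]
    simp
  · have hc : ((n:ℂ) * Complex.I) ≠ 0 := by
      simp [Complex.I_ne_zero, h]
    have heq : ∀ θ : ℝ, (n:ℂ) * θ * Complex.I = ((n:ℂ) * Complex.I) * θ := fun θ => by ring
    rw [intervalIntegral.integral_congr (g := fun θ : ℝ => Complex.exp (((n:ℂ) * Complex.I) * θ))
      (by intro θ _; simp only []; rw [heq θ])]
    rw [integral_exp_mul_complex hc]
    have h1 : (n:ℂ) * Complex.I * (2 * Real.pi : ℝ) = (n:ℂ) * (2 * (Real.pi:ℂ) * Complex.I) := by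
      push_cast; ring
    rw [h1, Complex.exp_int_mul_two_pi_mul_I]
    simp

lemma hcomp_polyMap (p : MvPolynomial (Fin d) ℂ) (k : ℕ) :
    hcomp (polyMap d p) k = polyMap d (homogeneousComponent k p) := by
  have hint : ∀ θ : ℝ, hIntegrand (polyMap d p) k θ =
      ∑ m ∈ Finset.range (p.totalDegree + 1),
        Complex.exp (((m:ℤ) - (k:ℤ) : ℤ) * θ * Complex.I) •
          polyMap d (homogeneousComponent m p) := by
    intro θ
    rw [hIntegrand, dilateFn_polyMap, map_sum, Finset.smul_sum]
    refine Finset.sum_congr rfl fun m _ => ?_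
    rw [_root_.map_smul, smul_smul]
    congr 1
    rw [← Complex.exp_nat_mul, ← Complex.exp_add]
    congr 1
    push_cast
    ring
  rw [hcomp, intervalIntegral.integral_congr (fun θ _ => hint θ),
    intervalIntegral.integral_finset_sum (f := fun (m : ℕ) (θ : ℝ) => Complex.exp (((m:ℤ) - (k:ℤ) : ℤ) * θ * Complex.I) •
        polyMap d (homogeneousComponent m p)) (fun m _ =>
      (Continuous.smul (by fun_prop : Continuous fun θ : ℝ =>
        Complex.exp (((m:ℤ) - (k:ℤ) : ℤ) * θ * Complex.I)) continuous_const).intervalIntegrable _ _)]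
  have hterm : ∀ m ∈ Finset.range (p.totalDegree + 1),
      (∫ θ in (0:ℝ)..(2 * Real.pi), Complex.exp (((m:ℤ) - (k:ℤ) : ℤ) * θ * Complex.I) •
        polyMap d (homogeneousComponent m p))
      = (if m = k then ((2 * Real.pi : ℝ) : ℂ) else 0) • polyMap d (homogeneousComponent m p) := by
    intro m _
    rw [intervalIntegral.integral_smul_const, integral_expI]
    congr 2
    simp [sub_eq_zero]
  rw [Finset.sum_congr rfl hterm]
  by_cases hk : k ∈ Finset.range (p.totalDegree + 1)
  · rw [Finset.sum_eq_single_of_mem k hk (fun m _ hm => by rw [if_neg hm, zero_smul]),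
      if_pos rfl, ← algebraMap_smul (R := ℝ) ℂ ((2 * Real.pi)⁻¹), smul_smul]
    have : (algebraMap ℝ ℂ) (2 * Real.pi)⁻¹ * ((2 * Real.pi : ℝ) : ℂ) = 1 := by
      have hpi : (2 * Real.pi : ℝ) ≠ 0 := by positivity
      rw [show (algebraMap ℝ ℂ) (2 * Real.pi)⁻¹ = (((2 * Real.pi)⁻¹ : ℝ) : ℂ) from rfl]
      rw [← Complex.ofReal_mul, inv_mul_cancel₀ hpi, Complex.ofReal_one]
    rw [this, one_smul]
  · have hgt : p.totalDegree < k := by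
      simp only [Finset.mem_range, not_lt] at hk
      omega
    rw [Finset.sum_eq_zero (fun m hm => by
      rw [if_neg, zero_smul]
      intro hmk
      subst hmk
      exact hk hm), smul_zero, homogeneousComponent_eq_zero _ _ hgt, map_zero]
instance homogFD (k : ℕ) : FiniteDimensional ℂ (homogeneousSubmodule (Fin d) ℂ k) := by
  have hle : homogeneousSubmodule (Fin d) ℂ k ≤ restrictTotalDegree (Fin d) ℂ k := fun p hp => by
    rw [mem_restrictTotalDegree]
    exact ((mem_homogeneousSubmodule _ _).mp hp).totalDegree_le
  exact Submodule.finiteDimensional_of_le hle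

/-- Image of the degree-`k` homogeneous polynomials in `C(CBall d, ℂ)`. -/
def homogImage (d k : ℕ) : Submodule ℂ C(CBall d, ℂ) :=
  (homogeneousSubmodule (Fin d) ℂ k).map (polyMap d).toLinearMap

lemma isClosed_homogImage (k : ℕ) : IsClosed ((homogImage d k : Set C(CBall d, ℂ))) := by
  haveI : FiniteDimensional ℂ (homogImage d k) :=
    Module.Finite.map (homogeneousSubmodule (Fin d) ℂ k) (polyMap d).toLinearMap
  exact Submodule.closed_of_finiteDimensional _

lemma hcomp_mem_homog {f : C(CBall d, ℂ)} (hf : f ∈ ballAlg d) (k : ℕ) :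
    ∃ q : MvPolynomial (Fin d) ℂ, q.IsHomogeneous k ∧ polyMap d q = hcomp f k := by
  have hcont := (lipschitz_hcomp (d := d) k).continuous
  have h1 : hcomp f k ∈ (fun g => hcomp g k) '' closure (Set.range (polyMap d)) :=
    ⟨f, hf, rfl⟩
  have h2 := image_closure_subset_closure_image (f := fun g => hcomp g k)
    (s := Set.range (polyMap d)) hcont
  have h3 : (fun g => hcomp g k) '' Set.range (polyMap d) ⊆
      (homogImage d k : Set C(CBall d, ℂ)) := by
    rintro _ ⟨_, ⟨p, rfl⟩, rfl⟩
    exact ⟨homogeneousComponent k p,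
      (mem_homogeneousSubmodule _ _).mpr (homogeneousComponent_isHomogeneous k p),
      (hcomp_polyMap p k).symm⟩
  have h4 : hcomp f k ∈ closure ((homogImage d k : Set C(CBall d, ℂ))) :=
    closure_mono h3 (h2 h1)
  rw [(isClosed_homogImage k).closure_eq] at h4
  obtain ⟨q, hq, hq2⟩ := h4
  exact ⟨q, (mem_homogeneousSubmodule _ _).mp hq, hq2⟩
lemma const_mem_ballAlg (c : ℂ) : (c • (1 : C(CBall d, ℂ))) ∈ ballAlg d := by
  apply subset_closure
  refine ⟨MvPolynomial.C c, ?_⟩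
  rw [show (MvPolynomial.C c : MvPolynomial (Fin d) ℂ) = algebraMap ℂ _ c from rfl,
    AlgHom.commutes, Algebra.algebraMap_eq_smul_one]

section JProps
variable {J : Set C(CBall d, ℂ)}

lemma smul_mem_J (hJ : IsIdealOfBallAlg d J) {g : C(CBall d, ℂ)} (hg : g ∈ J) (c : ℂ) : c • g ∈ J := by
  have h := hJ.2.2.2 g hg _ (const_mem_ballAlg c)
  have : (c • (1 : C(CBall d, ℂ))) * g = c • g := by
    ext z; simp
  rwa [this] at h

lemma convex_J (hJ : IsIdealOfBallAlg d J) : Convex ℝ J := by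
  intro x hx y hy a b ha hb hab
  have hax : a • x = ((a : ℂ)) • x := (algebraMap_smul ℂ a x).symm
  have hby : b • y = ((b : ℂ)) • y := (algebraMap_smul ℂ b y).symm
  rw [hax, hby]
  exact hJ.2.2.1 _ (smul_mem_J hJ hx _) _ (smul_mem_J hJ hy _)

/-- A closed set containing all proper dilates contains all dilates. -/
lemma dilate_mem_closed {C : Set C(CBall d, ℂ)} (hC : IsClosed C) (f : C(CBall d, ℂ))
    (h : ∀ s : ℂ, ∀ hs : ‖s‖ < 1, dilateFn d s hs.le f ∈ C)
    (t : ℂ) (ht : ‖t‖ ≤ 1) : dilateFn d t ht f ∈ C := by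
  have hlt : ∀ n : ℕ, ‖((1 - 1/(n+1) : ℝ) : ℂ) * t‖ < 1 := by
    intro n
    have hn : (0:ℝ) < (n:ℝ)+1 := by positivity
    have h1n : (0:ℝ) < 1/((n:ℝ)+1) := by positivity
    have h01 : (0:ℝ) ≤ 1 - 1/(n+1) := by
      have : (1:ℝ)/(n+1) ≤ 1 := by
        rw [div_le_one hn]; linarith [Nat.cast_nonneg (α := ℝ) n]
      linarith
    rw [norm_mul, Complex.norm_real, Real.norm_eq_abs, _root_.abs_of_nonneg h01]
    calc (1 - 1/((n:ℝ)+1)) * ‖t‖ ≤ (1 - 1/((n:ℝ)+1)) * 1 := by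
          exact mul_le_mul_of_nonneg_left ht h01
      _ < 1 := by rw [mul_one]; linarith
  have htend : Tendsto (fun n : ℕ => (⟨((1 - 1/(n+1) : ℝ) : ℂ) * t, (hlt n).le⟩ :
      {s : ℂ // ‖s‖ ≤ 1})) atTop (𝓝 ⟨t, ht⟩) := by
    rw [tendsto_subtype_rng]
    have h1 : Tendsto (fun n : ℕ => (1 - 1/(n+1) : ℝ)) atTop (𝓝 1) := by
      have := (tendsto_one_div_add_atTop_nhds_zero_nat (𝕜 := ℝ)).const_sub 1
      simpa using this.congr (fun n => by norm_num)
    have h2 : Tendsto (fun n : ℕ => ((1 - 1/(n+1) : ℝ) : ℂ)) atTop (𝓝 ((1:ℝ) : ℂ)) :=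
      (Complex.continuous_ofReal.tendsto _).comp h1
    have := h2.mul_const t
    simpa using this
  have hT := ((dilateCM f).continuous.tendsto _).comp htend
  rw [dilateCM_apply] at hT
  refine hC.mem_of_tendsto hT (Filter.Eventually.of_forall fun n => ?_)
  show dilateCM f ⟨_, (hlt n).le⟩ ∈ C
  rw [dilateCM_apply]
  exact h _ (hlt n)

lemma dilate_mem_J (hJcl : IsClosed J) (hJhom : IsHomogBallIdeal d J) {g : C(CBall d, ℂ)} (hg : g ∈ J) (t : ℂ) (ht : ‖t‖ ≤ 1) :
    dilateFn d t ht g ∈ J :=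
  dilate_mem_closed hJcl g (fun s hs => hJhom g hg s hs) t ht

lemma hIntegrand_mem_J (hJ : IsIdealOfBallAlg d J) (hJcl : IsClosed J) (hJhom : IsHomogBallIdeal d J) {g : C(CBall d, ℂ)} (hg : g ∈ J) (k : ℕ) (θ : ℝ) :
    hIntegrand g k θ ∈ J :=
  smul_mem_J hJ (dilate_mem_J hJcl hJhom hg _ _) _

lemma hcomp_mem_J (hJ : IsIdealOfBallAlg d J) (hJcl : IsClosed J) (hJhom : IsHomogBallIdeal d J) {g : C(CBall d, ℂ)} (hg : g ∈ J) (k : ℕ) : hcomp g k ∈ J := by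
  classical
  set ν : MeasureTheory.Measure ℝ :=
    (ENNReal.ofReal (2 * Real.pi))⁻¹ • MeasureTheory.volume.restrict (Set.Ioc 0 (2 * Real.pi))
    with hν
  have hpi : (0:ℝ) < 2 * Real.pi := by positivity
  haveI : MeasureTheory.IsProbabilityMeasure ν := by
    constructor
    rw [hν]
    simp only [MeasureTheory.Measure.smul_apply, MeasureTheory.Measure.restrict_apply
      MeasurableSet.univ, Set.univ_inter, Real.volume_Ioc, sub_zero, smul_eq_mul]
    rw [ENNReal.inv_mul_cancel]
    · rw [Ne, ENNReal.ofReal_eq_zero, not_le]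
      exact hpi
    · exact ENNReal.ofReal_ne_top
  have hInt : MeasureTheory.Integrable (hIntegrand g k) ν := by
    refine MeasureTheory.Integrable.smul_measure ?_
      (ENNReal.inv_ne_top.mpr (by rw [Ne, ENNReal.ofReal_eq_zero, not_le]; exact hpi))
    have h1 : MeasureTheory.IntegrableOn (hIntegrand g k) (Set.Ioc 0 (2 * Real.pi)) := by
      have := (intervalIntegrable_hIntegrand g k 0 (2 * Real.pi))
      rw [intervalIntegrable_iff_integrableOn_Ioc_of_le hpi.le] at this
      exact this
    exact h1
  have hmem : ∀ᵐ θ ∂ν, hIntegrand g k θ ∈ J :=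
    Filter.Eventually.of_forall fun θ => hIntegrand_mem_J hJ hJcl hJhom hg k θ
  have key := (convex_J hJ).integral_mem hJcl hmem hInt
  have heq : hcomp g k = ∫ θ, hIntegrand g k θ ∂ν := by
    rw [hν, MeasureTheory.integral_smul_measure, hcomp,
      intervalIntegral.integral_of_le hpi.le]
    congr 1
    rw [ENNReal.toReal_inv, ENNReal.toReal_ofReal hpi.le]
  rwa [heq]

end JProps
lemma sum_hcomp_polyMap (p : MvPolynomial (Fin d) ℂ) (t : ℂ) (ht : ‖t‖ ≤ 1) {K : ℕ}
    (hK : p.totalDegree + 1 ≤ K) :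
    ∑ k ∈ Finset.range K, t ^ k • hcomp (polyMap d p) k = dilateFn d t ht (polyMap d p) := by
  rw [dilateFn_polyMap, map_sum]
  have h1 : ∀ m, polyMap d (t ^ m • homogeneousComponent m p)
      = t ^ m • hcomp (polyMap d p) m := fun m => by
    rw [_root_.map_smul, hcomp_polyMap]
  rw [Finset.sum_congr rfl (fun m _ => h1 m)]
  refine (Finset.sum_subset (Finset.range_subset_range.mpr hK) fun k _ hk => ?_).symm
  rw [hcomp_polyMap, homogeneousComponent_eq_zero, map_zero, smul_zero]
  simp only [Finset.mem_range, not_lt] at hk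
  omega

lemma tendsto_sum_hcomp {f : C(CBall d, ℂ)} (hf : f ∈ ballAlg d) {t : ℂ} (ht : ‖t‖ < 1) :
    Tendsto (fun K => ∑ k ∈ Finset.range K, t ^ k • hcomp f k) atTop
      (𝓝 (dilateFn d t ht.le f)) := by
  rw [Metric.tendsto_atTop]
  intro ε hε
  have hr1 : (0:ℝ) < 1 - ‖t‖ := sub_pos.mpr ht
  have hgeom : ∀ K : ℕ, (∑ k ∈ Finset.range K, ‖t‖ ^ k) ≤ (1 - ‖t‖)⁻¹ := by
    intro K
    have hsum : Summable fun k : ℕ => ‖t‖ ^ k :=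
      summable_geometric_of_lt_one (norm_nonneg t) ht
    calc ∑ k ∈ Finset.range K, ‖t‖ ^ k ≤ ∑' k : ℕ, ‖t‖ ^ k :=
        Summable.sum_le_tsum _ (fun k _ => by positivity) hsum
      _ = (1 - ‖t‖)⁻¹ := tsum_geometric_of_lt_one (norm_nonneg t) ht
  set M := (1 - ‖t‖)⁻¹ + 1 with hM
  have hM0 : (0:ℝ) < M := by
    have := inv_pos.mpr hr1
    rw [hM]; linarith
  obtain ⟨P, hPrange, hPdist⟩ : ∃ P ∈ Set.range (polyMap d), dist f P < ε / (2 * M) :=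
    Metric.mem_closure_iff.mp hf _ (by positivity)
  obtain ⟨p, rfl⟩ := hPrange
  refine ⟨p.totalDegree + 1, fun K hK => ?_⟩
  have hd1 : dilateFn d t ht.le (polyMap d p - f)
      = dilateFn d t ht.le (polyMap d p) - dilateFn d t ht.le f := by
    ext z; simp [dilateFn_apply]
  have hd2 : ∑ k ∈ Finset.range K, t ^ k • hcomp (f - polyMap d p) k
      = (∑ k ∈ Finset.range K, t ^ k • hcomp f k)
        - ∑ k ∈ Finset.range K, t ^ k • hcomp (polyMap d p) k := by
    rw [← Finset.sum_sub_distrib]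
    exact Finset.sum_congr rfl fun k _ => by rw [hcomp_sub, smul_sub]
  have hsplit : (∑ k ∈ Finset.range K, t ^ k • hcomp f k) - dilateFn d t ht.le f
      = (∑ k ∈ Finset.range K, t ^ k • hcomp (f - polyMap d p) k)
        + dilateFn d t ht.le (polyMap d p - f) := by
    rw [hd2, sum_hcomp_polyMap p t ht.le hK, hd1]
    abel
  rw [dist_eq_norm, hsplit]
  have hb1 : ‖∑ k ∈ Finset.range K, t ^ k • hcomp (f - polyMap d p) k‖
      ≤ (∑ k ∈ Finset.range K, ‖t‖ ^ k) * ‖f - polyMap d p‖ := by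
    calc ‖∑ k ∈ Finset.range K, t ^ k • hcomp (f - polyMap d p) k‖
        ≤ ∑ k ∈ Finset.range K, ‖t ^ k • hcomp (f - polyMap d p) k‖ :=
          norm_sum_le _ _
      _ ≤ ∑ k ∈ Finset.range K, ‖t‖ ^ k * ‖f - polyMap d p‖ := by
          refine Finset.sum_le_sum fun k _ => ?_
          rw [norm_smul, norm_pow]
          exact mul_le_mul_of_nonneg_left (norm_hcomp_le _ _) (by positivity)
      _ = (∑ k ∈ Finset.range K, ‖t‖ ^ k) * ‖f - polyMap d p‖ := by
          rw [Finset.sum_mul]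
  have hb2 : ‖dilateFn d t ht.le (polyMap d p - f)‖ ≤ ‖f - polyMap d p‖ := by
    refine (norm_dilateFn_le _ _ _).trans_eq ?_
    rw [norm_sub_rev]
  have hfP : ‖f - polyMap d p‖ < ε / (2 * M) := by rwa [dist_eq_norm] at hPdist
  have hfP0 : (0:ℝ) ≤ ‖f - polyMap d p‖ := norm_nonneg _
  calc ‖(∑ k ∈ Finset.range K, t ^ k • hcomp (f - polyMap d p) k)
        + dilateFn d t ht.le (polyMap d p - f)‖
      ≤ ‖∑ k ∈ Finset.range K, t ^ k • hcomp (f - polyMap d p) k‖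
        + ‖dilateFn d t ht.le (polyMap d p - f)‖ := norm_add_le _ _
    _ ≤ (∑ k ∈ Finset.range K, ‖t‖ ^ k) * ‖f - polyMap d p‖ + ‖f - polyMap d p‖ :=
        add_le_add hb1 hb2
    _ ≤ (1 - ‖t‖)⁻¹ * ‖f - polyMap d p‖ + ‖f - polyMap d p‖ :=
        add_le_add_left (mul_le_mul_of_nonneg_right (hgeom K) hfP0) _
    _ = M * ‖f - polyMap d p‖ := by rw [hM]; ring
    _ < M * (ε / (2 * M)) := by
        exact mul_lt_mul_of_pos_left hfP hM0
    _ < ε := by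
        rw [mul_div_assoc']
        rw [div_lt_iff₀ (by positivity)]
        have : M * ε * 1 < M * ε * 2 := by
          have hMε : 0 < M * ε := by positivity
          linarith
        calc M * ε = M * ε * 1 := by ring
          _ < M * ε * 2 := this
          _ = ε * (2 * M) := by ring
lemma hasSum_hcomp_apply {f : C(CBall d, ℂ)} (hf : f ∈ ballAlg d) {t : ℂ} (ht : ‖t‖ < 1)
    (z : CBall d) :
    HasSum (fun k => t ^ k * hcomp f k z) (f (dilatePt d t ht.le z)) := by
  have hsummable : Summable fun k => t ^ k * hcomp f k z := by
    apply Summable.of_norm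
    refine Summable.of_nonneg_of_le (fun k => norm_nonneg _) (fun k => ?_)
      (((summable_geometric_of_lt_one (norm_nonneg t) ht)).mul_right ‖f‖)
    rw [norm_mul, norm_pow]
    refine mul_le_mul_of_nonneg_left ?_ (by positivity)
    exact ((hcomp f k).norm_coe_le_norm z).trans (norm_hcomp_le f k)
  have h1 := hsummable.hasSum
  have h2 : Tendsto (fun K => ∑ k ∈ Finset.range K, t ^ k * hcomp f k z) atTop
      (𝓝 (dilateFn d t ht.le f z)) := by
    have hev : Continuous fun g : C(CBall d, ℂ) => g z :=
      continuous_eval_const z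
    have h3 := (hev.tendsto _).comp (tendsto_sum_hcomp hf ht)
    convert h3 using 2 with K
    simp
  have h4 := h1.tendsto_sum_nat
  have h5 : ∑' k, t ^ k * hcomp f k z = dilateFn d t ht.le f z :=
    tendsto_nhds_unique h4 h2
  rw [h5] at h1
  exact h1

set_option maxHeartbeats 1000000 in
/-- Uniqueness of power series coefficients. -/
lemma coeff_eq_zero {a : ℕ → ℂ} (hs : Summable fun k => ‖a k‖ * (2⁻¹ : ℝ) ^ k)
    (h0 : ∀ t : ℂ, ‖t‖ < 1 → HasSum (fun k => a k * t ^ k) 0) : ∀ k, a k = 0 := by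
  have hshift : ∀ j : ℕ, Summable fun m => ‖a (m + j)‖ * (2⁻¹ : ℝ) ^ m := by
    intro j
    have h1 : Summable fun m => ‖a (m + j)‖ * (2⁻¹ : ℝ) ^ (m + j) :=
      (summable_nat_add_iff j).mpr hs
    refine (h1.mul_right ((2 : ℝ) ^ j)).congr fun m => ?_
    rw [pow_add]
    field_simp
    rw [mul_assoc, ← mul_pow]; norm_num
  intro k
  induction k using Nat.strong_induction_on with
  | _ k ih =>
  set b : ℕ → ℂ := fun m => a (m + k) with hb
  have hsb : Summable fun m => ‖b (m + 1)‖ * (2⁻¹ : ℝ) ^ m := by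
    refine (hshift (k + 1)).congr fun m => ?_
    rw [hb]
    simp only []
    rw [show m + 1 + k = m + (k + 1) by omega]
  set C : ℝ := ∑' m, ‖b (m + 1)‖ * (2⁻¹ : ℝ) ^ m with hC
  have hC0 : 0 ≤ C := tsum_nonneg fun m => by positivity
  have key : ∀ s : ℝ, 0 < s → s ≤ 4⁻¹ → ‖a k‖ ≤ s * C := by
    intro s hs0 hs4
    have hs12 : s ≤ 2⁻¹ := hs4.trans (by norm_num)
    have hnorm : ‖(s : ℂ)‖ = s := by
      rw [Complex.norm_real, Real.norm_eq_abs, _root_.abs_of_nonneg hs0.le]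
    have hslt : ‖(s : ℂ)‖ < 1 := by rw [hnorm]; linarith
    have hsum0 := h0 (s : ℂ) hslt
    have hsummable : Summable fun m => a m * (s : ℂ) ^ m := hsum0.summable
    have hsplit := Summable.sum_add_tsum_nat_add (f := fun m => a m * (s : ℂ) ^ m) k hsummable
    have hfirst : ∑ i ∈ Finset.range k, a i * (s : ℂ) ^ i = 0 :=
      Finset.sum_eq_zero fun i hi => by
        rw [ih i (Finset.mem_range.mp hi), zero_mul]
    rw [hsum0.tsum_eq, hfirst, zero_add] at hsplit
    have hfac : ∑' m, a (m + k) * (s : ℂ) ^ (m + k)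
        = (∑' m, b m * (s : ℂ) ^ m) * (s : ℂ) ^ k := by
      rw [← tsum_mul_right]
      congr 1 with m
      rw [pow_add, hb]; ring
    rw [hfac] at hsplit
    have hsk : ((s : ℂ)) ^ k ≠ 0 := pow_ne_zero _ (by
      simpa using (Complex.ofReal_ne_zero.mpr hs0.ne'))
    have htail0 : ∑' m, b m * (s : ℂ) ^ m = 0 := by
      rcases mul_eq_zero.mp hsplit with h | h
      · exact h
      · exact absurd h hsk
    have hbnorm : ∀ j, Summable fun m => ‖b (m + j) * (s : ℂ) ^ (m + j)‖ := by
      intro j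
      refine Summable.of_nonneg_of_le (fun m => norm_nonneg _) (fun m => ?_)
        ((summable_nat_add_iff j).mpr ((hshift k).congr fun m => rfl))
      rw [norm_mul, norm_pow, hnorm]
      refine mul_le_mul_of_nonneg_left (pow_le_pow_left₀ hs0.le hs12 _) (norm_nonneg _)
    have hsummable2 : Summable fun m => b m * (s : ℂ) ^ m :=
      Summable.of_norm (by simpa using hbnorm 0)
    have hsplit2 := Summable.sum_add_tsum_nat_add (f := fun m => b m * (s : ℂ) ^ m) 1 hsummable2
    rw [htail0] at hsplit2
    have hfirst2 : ∑ i ∈ Finset.range 1, b i * (s : ℂ) ^ i = b 0 := by simp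
    rw [hfirst2] at hsplit2
    have hak : (a k : ℂ) = -∑' m, b (m + 1) * (s : ℂ) ^ (m + 1) := by
      have : b 0 = a k := by rw [hb]; simp
      rw [← this]
      linear_combination hsplit2
    rw [hak, norm_neg]
    calc ‖∑' m, b (m + 1) * (s : ℂ) ^ (m + 1)‖
        ≤ ∑' m, ‖b (m + 1) * (s : ℂ) ^ (m + 1)‖ := norm_tsum_le_tsum_norm (hbnorm 1)
      _ ≤ ∑' m, (‖b (m + 1)‖ * (2⁻¹ : ℝ) ^ m) * s := by
          refine Summable.tsum_le_tsum (fun m => ?_) (hbnorm 1) (hsb.mul_right s)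
          rw [norm_mul, norm_pow, hnorm, pow_add, pow_one, ← mul_assoc]
          refine mul_le_mul_of_nonneg_right ?_ hs0.le
          exact mul_le_mul_of_nonneg_left (pow_le_pow_left₀ hs0.le hs12 _) (norm_nonneg _)
      _ = C * s := tsum_mul_right
      _ = s * C := by ring
  by_contra hak
  have hak0 : 0 < ‖a k‖ := norm_pos_iff.mpr hak
  have hs0 : 0 < min (4⁻¹ : ℝ) (‖a k‖ / (2 * (C + 1))) := by positivity
  have h1 := key _ hs0 (min_le_left _ _)
  have h2 : min (4⁻¹ : ℝ) (‖a k‖ / (2 * (C + 1))) * C ≤ (‖a k‖ / (2 * (C + 1))) * C :=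
    mul_le_mul_of_nonneg_right (min_le_right _ _) hC0
  have h3 : (‖a k‖ / (2 * (C + 1))) * C < ‖a k‖ := by
    rw [div_mul_eq_mul_div, div_lt_iff₀ (by positivity)]
    have hCC : C < 2 * (C + 1) := by linarith
    exact mul_lt_mul_of_pos_left hCC hak0
  linarith
end Stmt10

/-- Coefficients of the `N`-th power of a series with coefficients `b`. -/
def Stmt10.powAD {R : Type*} [CommSemiring R] (b : ℕ → R) : ℕ → ℕ → R
  | 0 => fun k => if k = 0 then 1 else 0
  | (N + 1) => fun k => ∑ ij ∈ Finset.HasAntidiagonal.antidiagonal k, b ij.1 * Stmt10.powAD b N ij.2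

namespace Stmt10

lemma map_powAD {R S : Type*} [CommSemiring R] [CommSemiring S] (φ : R →+* S)
    (b : ℕ → R) (N k : ℕ) : φ (powAD b N k) = powAD (fun m => φ (b m)) N k := by
  induction N generalizing k with
  | zero => simp [powAD, apply_ite φ]
  | succ N ih => simp [powAD, map_sum, map_mul, ih]

lemma powAD_mul_geom {R : Type*} [CommSemiring R] (b : ℕ → R) (t : R) (N : ℕ) :
    ∀ k, powAD b N k * t ^ k = powAD (fun m => b m * t ^ m) N k := by
  induction N with
  | zero => intro k; by_cases h : k = 0 <;> simp [powAD, h]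
  | succ N ih =>
    intro k
    show (∑ ij ∈ Finset.HasAntidiagonal.antidiagonal k, b ij.1 * powAD b N ij.2) * t ^ k = _
    rw [Finset.sum_mul]
    refine Finset.sum_congr rfl fun ij hij => ?_
    have hk : ij.1 + ij.2 = k := Finset.HasAntidiagonal.mem_antidiagonal.mp hij
    rw [← hk, pow_add, ← ih ij.2]
    ring

lemma powAD_mem {R : Type*} [CommRing R] (I : Ideal R) (b : ℕ → R)
    (hb : ∀ m, b m ∈ I) (N : ℕ) (k : ℕ) : powAD b N k ∈ I ^ N := by
  induction N generalizing k with
  | zero =>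
    rw [pow_zero, Ideal.one_eq_top]
    exact Submodule.mem_top
  | succ N ih =>
    show (∑ ij ∈ Finset.HasAntidiagonal.antidiagonal k, b ij.1 * powAD b N ij.2) ∈ I ^ (N + 1)
    refine Ideal.sum_mem _ fun ij _ => ?_
    rw [pow_succ']
    exact Ideal.mul_mem_mul (hb ij.1) (ih ij.2)

lemma powAD_hasSum (b : ℕ → ℂ) (hb : Summable fun k => ‖b k‖) (N : ℕ) :
    (Summable fun k => ‖powAD b N k‖) ∧ HasSum (powAD b N) ((∑' k, b k) ^ N) := by
  induction N with
  | zero =>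
    constructor
    · refine summable_of_ne_finset_zero (s := {0}) fun k hk => ?_
      simp only [Finset.mem_singleton] at hk
      simp [powAD, hk]
    · rw [pow_zero]
      have := hasSum_ite_eq (0 : ℕ) (1 : ℂ)
      exact this.congr_fun fun k => by
        show _ = powAD b 0 k
        simp [powAD, eq_comm]
  | succ N ih =>
    have hdef : (powAD b (N + 1)) = fun n =>
        ∑ kl ∈ Finset.HasAntidiagonal.antidiagonal n, b kl.1 * powAD b N kl.2 := rfl
    have hnorm : Summable fun n => ‖∑ kl ∈ Finset.HasAntidiagonal.antidiagonal n, b kl.1 * powAD b N kl.2‖ :=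
      summable_norm_sum_mul_antidiagonal_of_summable_norm hb ih.1
    have hnorm' : Summable fun n => ‖powAD b (N + 1) n‖ := by rw [hdef]; exact hnorm
    refine ⟨hnorm', ?_⟩
    have hS : Summable (powAD b (N + 1)) := Summable.of_norm hnorm'
    have hprod := tsum_mul_tsum_eq_tsum_sum_antidiagonal_of_summable_norm hb ih.1
    have htsum : ∑' n, powAD b (N + 1) n = (∑' k, b k) ^ (N + 1) := by
      rw [hdef, ← hprod, ih.2.tsum_eq, pow_succ']
    rw [← htsum]
    exact hS.hasSum
variable {J : Set C(CBall d, ℂ)}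

/-- The ideal of polynomials whose restriction lies in `J`. -/
def polyIdeal (hJ : IsIdealOfBallAlg d J) : Ideal (MvPolynomial (Fin d) ℂ) where
  carrier := {p | polyMap d p ∈ J}
  add_mem' := by
    intro p q hp hq
    simp only [Set.mem_setOf_eq, map_add] at *
    exact hJ.2.2.1 _ hp _ hq
  zero_mem' := by
    simp only [Set.mem_setOf_eq, map_zero]
    exact hJ.2.1
  smul_mem' := by
    intro q p hp
    simp only [smul_eq_mul, Set.mem_setOf_eq, map_mul] at *
    exact hJ.2.2.2 _ hp _ (subset_closure ⟨q, rfl⟩)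

lemma mem_polyIdeal (hJ : IsIdealOfBallAlg d J) (p : MvPolynomial (Fin d) ℂ) :
    p ∈ polyIdeal hJ ↔ polyMap d p ∈ J := Iff.rfl

lemma homogComponent_mem_polyIdeal (hJ : IsIdealOfBallAlg d J) (hJcl : IsClosed J)
    (hJhom : IsHomogBallIdeal d J) {p : MvPolynomial (Fin d) ℂ} (hp : p ∈ polyIdeal hJ)
    (m : ℕ) : homogeneousComponent m p ∈ polyIdeal hJ := by
  rw [mem_polyIdeal, ← hcomp_polyMap]
  exact hcomp_mem_J hJ hJcl hJhom hp m

lemma aeval_eq_eval (h : Fin d → ℂ) (p : MvPolynomial (Fin d) ℂ) :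
    MvPolynomial.aeval h p = eval h p := by
  rw [aeval_def, Algebra.algebraMap_self]
  rfl

/-- The zero locus of `polyIdeal` is a cone. -/
lemma cone_zeroLocus (hJ : IsIdealOfBallAlg d J) (hJcl : IsClosed J)
    (hJhom : IsHomogBallIdeal d J) {w : Fin d → ℂ}
    (hw : w ∈ MvPolynomial.zeroLocus ℂ (polyIdeal hJ)) (s : ℂ) :
    (fun i => s * w i) ∈ MvPolynomial.zeroLocus ℂ (polyIdeal hJ) := by
  rw [MvPolynomial.mem_zeroLocus_iff] at hw ⊢
  simp only [aeval_eq_eval] at hw ⊢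
  intro p hp
  conv_lhs => rw [← sum_homogeneousComponent p]
  rw [map_sum]
  refine Finset.sum_eq_zero fun m _ => ?_
  rw [isHomog_eval_smul (homogeneousComponent_isHomogeneous m p) s w,
    hw _ (homogComponent_mem_polyIdeal hJ hJcl hJhom hp m), mul_zero]

lemma VOmega_mem_zeroLocus (hJ : IsIdealOfBallAlg d J) {z : CBall d} (hz : z ∈ VOmega d J) :
    (fun i => (z : Cd d) i) ∈ MvPolynomial.zeroLocus ℂ (polyIdeal hJ) := by
  rw [MvPolynomial.mem_zeroLocus_iff]
  simp only [aeval_eq_eval]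
  intro p hp
  rw [← polyMap_apply]
  exact hz.2 _ hp

lemma mem_VOmega_of_zeroLocus (hJ : IsIdealOfBallAlg d J) (hJcl : IsClosed J)
    (hJhom : IsHomogBallIdeal d J) {z : CBall d} (h1 : ‖(z : Cd d)‖ < 1)
    (h2 : (fun i => (z : Cd d) i) ∈ MvPolynomial.zeroLocus ℂ (polyIdeal hJ)) :
    z ∈ VOmega d J := by
  refine ⟨h1, fun g hg => ?_⟩
  have hcz : ∀ k, hcomp g k z = 0 := by
    intro k
    obtain ⟨q, hqh, hq⟩ := hcomp_mem_homog (hJ.1 hg) k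
    have hqI : q ∈ polyIdeal hJ := by
      rw [mem_polyIdeal, hq]
      exact hcomp_mem_J hJ hJcl hJhom hg k
    have h3 := (MvPolynomial.mem_zeroLocus_iff.mp h2) q hqI
    rw [← hq, polyMap_apply]
    rw [aeval_eq_eval] at h3
    exact h3
  have hdil : ∀ t : ℂ, ∀ ht : ‖t‖ < 1, dilateFn d t ht.le g z = 0 := by
    intro t ht
    have hs := hasSum_hcomp_apply (hJ.1 hg) ht z
    have hz0 : HasSum (fun _ : ℕ => (0 : ℂ)) (g (dilatePt d t ht.le z)) :=
      hs.congr_fun fun k => by rw [hcz, mul_zero]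
    exact (hasSum_zero.unique hz0).symm
  have hCclosed : IsClosed {h : C(CBall d, ℂ) | h z = 0} :=
    isClosed_eq (continuous_eval_const z) continuous_const
  exact mem_of_dilates hCclosed g hdil

lemma pow_mem_ballAlg {f : C(CBall d, ℂ)} (hf : f ∈ ballAlg d) (n : ℕ) :
    f ^ n ∈ ballAlg d := by
  have hball : ballAlg d = ((polyMap d).range.topologicalClosure : Set C(CBall d, ℂ)) := by
    rw [ballAlg, Subalgebra.topologicalClosure_coe]
    congr 1
  rw [hball] at hf ⊢
  exact pow_mem hf n

lemma sum_mem_J (hJ : IsIdealOfBallAlg d J) (s : Finset ℕ) (g : ℕ → C(CBall d, ℂ))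
    (hg : ∀ k ∈ s, g k ∈ J) : (∑ k ∈ s, g k) ∈ J := by
  classical
  induction s using Finset.induction_on with
  | empty => simpa using hJ.2.1
  | insert _ _ hx ih =>
    rw [Finset.sum_insert hx]
    exact hJ.2.2.1 _ (hg _ (Finset.mem_insert_self _ _))
      _ (ih fun k hk => hg k (Finset.mem_insert_of_mem hk))
lemma hcomp_vanishes_on_V (hJ : IsIdealOfBallAlg d J) (hJhom : IsHomogBallIdeal d J)
    {f : C(CBall d, ℂ)} (hf : f ∈ ballAlg d) (hvan : ∀ z ∈ VOmega d J, f z = 0)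
    (k : ℕ) {z : CBall d} (hz : z ∈ VOmega d J) : hcomp f k z = 0 := by
  have hs : Summable fun m => ‖hcomp f m z‖ * (2⁻¹ : ℝ) ^ m := by
    refine Summable.of_nonneg_of_le (fun m => by positivity) (fun m => ?_)
      ((summable_geometric_of_lt_one (by norm_num) (by norm_num : (2⁻¹:ℝ) < 1)).mul_left ‖f‖)
    exact mul_le_mul_of_nonneg_right
      (((hcomp f m).norm_coe_le_norm z).trans (norm_hcomp_le f m)) (by positivity)
  have h0 : ∀ t : ℂ, ‖t‖ < 1 → HasSum (fun m => hcomp f m z * t ^ m) 0 := by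
    intro t ht
    have hzt : dilatePt d t ht.le z ∈ VOmega d J := by
      constructor
      · show ‖t • (z : Cd d)‖ < 1
        rw [norm_smul]
        calc ‖t‖ * ‖(z : Cd d)‖ ≤ 1 * ‖(z : Cd d)‖ :=
            mul_le_mul_of_nonneg_right ht.le (norm_nonneg _)
          _ = ‖(z : Cd d)‖ := one_mul _
          _ < 1 := hz.1
      · intro g hg
        exact hz.2 _ (hJhom g hg t ht)
    have hsum := hasSum_hcomp_apply hf ht z
    rw [hvan _ hzt] at hsum
    exact hsum.congr_fun fun m => mul_comm _ _
  exact coeff_eq_zero hs h0 k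

lemma Qk_vanishes (hJ : IsIdealOfBallAlg d J) (hJcl : IsClosed J)
    (hJhom : IsHomogBallIdeal d J) {f : C(CBall d, ℂ)} (hf : f ∈ ballAlg d)
    (hvan : ∀ z ∈ VOmega d J, f z = 0) {q : MvPolynomial (Fin d) ℂ} {k : ℕ}
    (hq : polyMap d q = hcomp f k) :
    ∀ w ∈ MvPolynomial.zeroLocus ℂ (polyIdeal hJ), eval w q = 0 := by
  intro w hw
  set wE : Cd d := (WithLp.equiv 2 (Fin d → ℂ)).symm w with hwEdef
  set pw : Polynomial ℂ :=
    MvPolynomial.aeval (fun i => Polynomial.C (w i) * Polynomial.X) q with hpw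
  have haveval : ∀ sc : ℂ, Polynomial.aeval sc pw = eval (fun i => w i * sc) q := by
    intro sc
    have hcomp' := MvPolynomial.comp_aeval (fun i => Polynomial.C (w i) * Polynomial.X)
      (Polynomial.aeval sc)
    have h2 := congrFun (congrArg DFunLike.coe hcomp') q
    simp only [AlgHom.coe_comp, Function.comp_apply] at h2
    rw [hpw, h2]
    simp only [map_mul, Polynomial.aeval_C, Polynomial.aeval_X]
    rw [← aeval_eq_eval]
    rfl
  have hs00 : (0:ℝ) < (‖wE‖ + 1)⁻¹ := by positivity
  have hroot : ∀ s : ℝ, s ∈ Set.Ioo (0:ℝ) ((‖wE‖ + 1)⁻¹) → pw.IsRoot ((s:ℂ)) := by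
    intro s hsmem
    obtain ⟨hs0, hs1⟩ := hsmem
    have hnorms : ‖((s:ℂ))‖ = s := by
      rw [Complex.norm_real, Real.norm_eq_abs, _root_.abs_of_nonneg hs0.le]
    have hnormlt : ‖(s:ℂ) • wE‖ < 1 := by
      rw [norm_smul, hnorms]
      calc s * ‖wE‖ ≤ (‖wE‖ + 1)⁻¹ * ‖wE‖ :=
          mul_le_mul_of_nonneg_right hs1.le (norm_nonneg _)
        _ < 1 := by
          rw [inv_mul_eq_div, div_lt_one (by positivity)]
          linarith
    set zs : CBall d := ⟨(s:ℂ) • wE, by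
      rw [Metric.mem_closedBall, dist_zero_right]
      exact hnormlt.le⟩ with hzs
    have hcoords : (fun i => ((zs : Cd d)) i) = fun i => (s:ℂ) * w i := rfl
    have hzsV : zs ∈ VOmega d J := by
      refine mem_VOmega_of_zeroLocus hJ hJcl hJhom ?_ ?_
      · exact hnormlt
      · rw [hcoords]
        exact cone_zeroLocus hJ hJcl hJhom hw ((s:ℂ))
    have h0 : hcomp f k zs = 0 := hcomp_vanishes_on_V hJ hJhom hf hvan k hzsV
    rw [← hq, polyMap_apply, hcoords] at h0
    show Polynomial.eval ((s:ℂ)) pw = 0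
    have h5 := haveval ((s:ℂ))
    rw [Polynomial.coe_aeval_eq_eval] at h5
    rw [h5, show (fun i => w i * (s:ℂ)) = fun i => (s:ℂ) * w i from
      funext fun i => mul_comm _ _]
    exact h0
  have hinf : {x : ℂ | pw.IsRoot x}.Infinite := by
    have him : (Complex.ofReal '' Set.Ioo (0:ℝ) ((‖wE‖ + 1)⁻¹)) ⊆ {x : ℂ | pw.IsRoot x} := by
      rintro _ ⟨s, hs, rfl⟩
      exact hroot s hs
    refine Set.Infinite.mono him ?_
    exact (Set.Ioo_infinite hs00).image (Set.injOn_of_injective Complex.ofReal_injective)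
  have hpw0 : pw = 0 := Polynomial.eq_zero_of_infinite_isRoot pw hinf
  have := haveval 1
  rw [hpw0, map_zero] at this
  rw [show w = fun i => w i * 1 from funext fun i => (mul_one _).symm]
  exact this.symm
lemma hcomp_pow_eq {f : C(CBall d, ℂ)} (hf : f ∈ ballAlg d)
    (Q : ℕ → MvPolynomial (Fin d) ℂ) (hQ : ∀ m, polyMap d (Q m) = hcomp f m)
    (N : ℕ) (k : ℕ) : hcomp (f ^ N) k = polyMap d (powAD Q N k) := by
  ext z
  set az : ℕ → ℂ := fun m => hcomp f m z with haz
  have hevalQ : eval (fun i => (z : Cd d) i) (powAD Q N k) = powAD az N k := by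
    rw [show eval (fun i => (z : Cd d) i) (powAD Q N k)
        = powAD (fun m => eval (fun i => (z : Cd d) i) (Q m)) N k from
      map_powAD _ Q N k]
    congr 1
    funext m
    rw [← polyMap_apply, hQ]
  set A : ℕ → ℂ := fun j => hcomp (f ^ N) j z with hA
  have hbound : ∀ m, ‖az m‖ ≤ ‖f‖ := fun m =>
    ((hcomp f m).norm_coe_le_norm z).trans (norm_hcomp_le f m)
  have hAbound : ∀ j, ‖A j‖ ≤ ‖f ^ N‖ := fun j =>
    ((hcomp (f ^ N) j).norm_coe_le_norm z).trans (norm_hcomp_le _ j)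
  have hc : ∀ t : ℂ, ‖t‖ < 1 → Summable fun m => ‖az m * t ^ m‖ := by
    intro t ht
    refine Summable.of_nonneg_of_le (fun m => norm_nonneg _) (fun m => ?_)
      ((summable_geometric_of_lt_one (norm_nonneg t) ht).mul_left ‖f‖)
    rw [norm_mul, norm_pow]
    exact mul_le_mul (hbound m) le_rfl (by positivity) (norm_nonneg f)
  have hBsum : ∀ t : ℂ, ∀ ht : ‖t‖ < 1,
      HasSum (fun j => powAD az N j * t ^ j) ((f (dilatePt d t ht.le z)) ^ N) := by
    intro t ht
    have hps := powAD_hasSum (fun m => az m * t ^ m) (hc t ht) N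
    have htsum : ∑' m, az m * t ^ m = f (dilatePt d t ht.le z) :=
      ((hasSum_hcomp_apply hf ht z).congr_fun fun m => mul_comm _ _).tsum_eq
    rw [htsum] at hps
    exact hps.2.congr_fun fun j => powAD_mul_geom az t N j
  have h0 : ∀ t : ℂ, ‖t‖ < 1 → HasSum (fun j => (A j - powAD az N j) * t ^ j) 0 := by
    intro t ht
    have hA' := hasSum_hcomp_apply (pow_mem_ballAlg hf N) ht z
    have hApow : (f ^ N) (dilatePt d t ht.le z) = (f (dilatePt d t ht.le z)) ^ N := by
      simp
    rw [hApow] at hA'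
    have hcomb := (hA'.congr_fun fun j => mul_comm _ _).sub (hBsum t ht)
    rw [sub_self] at hcomb
    exact hcomb.congr_fun fun j => sub_mul _ _ _
  have hs : Summable fun j => ‖A j - powAD az N j‖ * (2⁻¹ : ℝ) ^ j := by
    have hgeo : Summable fun j : ℕ => (2⁻¹ : ℝ) ^ j :=
      summable_geometric_of_lt_one (by norm_num) (by norm_num)
    have s1 : Summable fun j => ‖A j‖ * (2⁻¹ : ℝ) ^ j := by
      refine Summable.of_nonneg_of_le (fun j => by positivity) (fun j => ?_)
        (hgeo.mul_left ‖f ^ N‖)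
      exact mul_le_mul_of_nonneg_right (hAbound j) (by positivity)
    have s2 : Summable fun j => ‖powAD az N j‖ * (2⁻¹ : ℝ) ^ j := by
      have hu : ‖(((2⁻¹ : ℝ) : ℂ))‖ < 1 := by
        rw [Complex.norm_real, Real.norm_eq_abs,
          _root_.abs_of_nonneg (by norm_num : (0:ℝ) ≤ 2⁻¹)]
        norm_num
      have hps := (powAD_hasSum (fun m => az m * ((2⁻¹ : ℝ) : ℂ) ^ m) (hc _ hu) N).1
      refine hps.congr fun j => ?_
      rw [← powAD_mul_geom, norm_mul, norm_pow, Complex.norm_real, Real.norm_eq_abs,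
        _root_.abs_of_nonneg (by norm_num : (0:ℝ) ≤ 2⁻¹)]
    refine Summable.of_nonneg_of_le (fun j => by positivity) (fun j => ?_) (s1.add s2)
    have := norm_sub_le (A j) (powAD az N j)
    calc ‖A j - powAD az N j‖ * (2⁻¹ : ℝ) ^ j
        ≤ (‖A j‖ + ‖powAD az N j‖) * (2⁻¹ : ℝ) ^ j :=
          mul_le_mul_of_nonneg_right this (by positivity)
      _ = ‖A j‖ * (2⁻¹ : ℝ) ^ j + ‖powAD az N j‖ * (2⁻¹ : ℝ) ^ j := by ring
  have hzero := coeff_eq_zero hs h0 k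
  rw [polyMap_apply, hevalQ]
  have := sub_eq_zero.mp hzero
  exact this
end Stmt10

open Stmt10 in
/-- projective Nullstellensatz for the ball algebra. For a closed
homogeneous ideal `J` of the ball algebra `B`,
`√J = {f ∈ B : f(z) = 0 for all z ∈ V_Ω(J)}`. -/
theorem stmt10 (d : ℕ) (J : Set C(CBall d, ℂ))
    (hJ : IsIdealOfBallAlg d J) (hJcl : IsClosed J) (hJhom : IsHomogBallIdeal d J) :
    {f : C(CBall d, ℂ) | f ∈ ballAlg d ∧ ∃ n : ℕ, 1 ≤ n ∧ f ^ n ∈ J} =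
      {f : C(CBall d, ℂ) | f ∈ ballAlg d ∧ ∀ z ∈ VOmega d J, f z = 0} := by
  ext f
  simp only [Set.mem_setOf_eq]
  constructor
  · rintro ⟨hfB, n, hn1, hfn⟩
    refine ⟨hfB, fun z hz => ?_⟩
    have h1 : (f ^ n) z = 0 := hz.2 _ hfn
    have h2 : (f z) ^ n = 0 := by
      rw [← h1]; simp
    exact pow_eq_zero_iff (by omega : n ≠ 0) |>.mp h2
  · rintro ⟨hfB, hvan⟩
    refine ⟨hfB, ?_⟩
    choose Q hQhom hQmap using fun k => hcomp_mem_homog hfB k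
    have hQrad : ∀ k, Q k ∈ (polyIdeal hJ).radical := by
      intro k
      rw [← MvPolynomial.vanishingIdeal_zeroLocus_eq_radical (K := ℂ),
        MvPolynomial.mem_vanishingIdeal_iff]
      intro x hx
      exact (aeval_eq_eval x (Q k)).trans <| Qk_vanishes hJ hJcl hJhom hfB hvan (hQmap k) x hx
    obtain ⟨N, hN⟩ := Ideal.exists_radical_pow_le_of_fg (polyIdeal hJ)
      (IsNoetherian.noetherian _)
    refine ⟨max N 1, le_max_right _ _, ?_⟩
    have hNle : (polyIdeal hJ).radical ^ (max N 1) ≤ polyIdeal hJ :=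
      le_trans (Ideal.pow_le_pow_right (le_max_left N 1)) hN
    have hpow : ∀ k, powAD Q (max N 1) k ∈ polyIdeal hJ := fun k =>
      hNle (powAD_mem (polyIdeal hJ).radical Q hQrad (max N 1) k)
    have hcompJ : ∀ k, hcomp (f ^ (max N 1)) k ∈ J := fun k => by
      rw [hcomp_pow_eq hfB Q hQmap (max N 1) k]
      exact hpow k
    have hdilJ : ∀ t : ℂ, ∀ ht : ‖t‖ < 1, dilateFn d t ht.le (f ^ (max N 1)) ∈ J := by
      intro t ht
      refine hJcl.mem_of_tendsto (tendsto_sum_hcomp (pow_mem_ballAlg hfB (max N 1)) ht)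
        (Filter.Eventually.of_forall fun K => ?_)
      exact sum_mem_J hJ _ _ fun k _ => smul_mem_J hJ (hcompJ k) _
    exact mem_of_dilates hJcl _ hdilJ
end
end

section
/- Let γ : 𝔻 → ℂ^d be a holomorphic map on the open unit disc 𝔻 ⊆ ℂ, and let A : ℂ^d → ℂ^d be a ℂ-linear map such that ‖A(γ(t))‖ = ‖γ(t)‖ for every t ∈ 𝔻. Then ‖A(γ'(0))‖ = ‖γ'(0)‖, where γ'(0) is the derivative of γ at 0. -/
open Metric

noncomputable section

lemma key_step {d : ℕ} (Ac : Cd d →L[ℂ] Cd d) (f g : ℂ → Cd d)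
    (hf : DifferentiableOn ℂ f (ball 0 1)) (hg : DifferentiableOn ℂ g (ball 0 1))
    (h : ∀ t ∈ ball (0:ℂ) 1, (inner ℂ (Ac (f t)) (Ac (g t)) : ℂ) = inner ℂ (f t) (g t)) :
    ∀ t ∈ ball (0:ℂ) 1,
      (inner ℂ (Ac (deriv f t)) (Ac (g t)) : ℂ) = inner ℂ (deriv f t) (g t) ∧
      (inner ℂ (Ac (f t)) (Ac (deriv g t)) : ℂ) = inner ℂ (f t) (deriv g t) := by
  intro t ht
  have hmem : ball (0:ℂ) 1 ∈ nhds t := isOpen_ball.mem_nhds ht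
  have hfd : DifferentiableAt ℂ f t := (hf t ht).differentiableAt hmem
  have hgd : DifferentiableAt ℂ g t := (hg t ht).differentiableAt hmem
  have hfr : DifferentiableAt ℝ f t := hfd.restrictScalars ℝ
  have hgr : DifferentiableAt ℝ g t := hgd.restrictScalars ℝ
  have hAfd : DifferentiableAt ℂ (fun s => Ac (f s)) t :=
    (Ac.differentiable.differentiableAt).comp t hfd
  have hAgd : DifferentiableAt ℂ (fun s => Ac (g s)) t :=
    (Ac.differentiable.differentiableAt).comp t hgd
  have hAfr : DifferentiableAt ℝ (fun s => Ac (f s)) t := hAfd.restrictScalars ℝ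
  have hAgr : DifferentiableAt ℝ (fun s => Ac (g s)) t := hAgd.restrictScalars ℝ
  -- formulas for real fderivs in direction y
  have Hgen : ∀ (F : ℂ → Cd d), DifferentiableAt ℂ F t → ∀ y : ℂ,
      fderiv ℝ F t y = y • deriv F t := by
    intro F hF y
    rw [hF.fderiv_restrictScalars ℝ]
    have : (fderiv ℂ F t) y = (fderiv ℂ F t) (y • (1:ℂ)) := by simp
    calc (fderiv ℂ F t).restrictScalars ℝ y = (fderiv ℂ F t) y := rfl
      _ = y • (fderiv ℂ F t) 1 := by rw [this, map_smul]
      _ = y • deriv F t := by rw [fderiv_apply_one_eq_deriv]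
  have hderivAf : deriv (fun s => Ac (f s)) t = Ac (deriv f t) :=
    (Ac.hasFDerivAt.comp_hasDerivAt t hfd.hasDerivAt).deriv
  have hderivAg : deriv (fun s => Ac (g s)) t = Ac (deriv g t) :=
    (Ac.hasFDerivAt.comp_hasDerivAt t hgd.hasDerivAt).deriv
  -- the zero function
  have h0 : (fun s => (inner ℂ (Ac (f s)) (Ac (g s)) : ℂ) - inner ℂ (f s) (g s))
      =ᶠ[nhds t] (fun _ => (0:ℂ)) := by
    filter_upwards [hmem] with s hs
    rw [h s hs, sub_self]
  have hp : DifferentiableAt ℝ (fun s => (inner ℂ (Ac (f s)) (Ac (g s)) : ℂ)) t :=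
    hAfr.inner ℂ hAgr
  have hq : DifferentiableAt ℝ (fun s => (inner ℂ (f s) (g s) : ℂ)) t :=
    hfr.inner ℂ hgr
  have hzero : fderiv ℝ (fun s => (inner ℂ (Ac (f s)) (Ac (g s)) : ℂ) - inner ℂ (f s) (g s)) t = 0 := by
    rw [h0.fderiv_eq]
    exact fderiv_const_apply 0
  have hE : ∀ y : ℂ,
      (inner ℂ (Ac (f t)) (y • Ac (deriv g t)) : ℂ) + inner ℂ (y • Ac (deriv f t)) (Ac (g t))
      - ((inner ℂ (f t) (y • deriv g t) : ℂ) + inner ℂ (y • deriv f t) (g t)) = 0 := by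
    intro y
    have e1 : fderiv ℝ (fun s => (inner ℂ (Ac (f s)) (Ac (g s)) : ℂ) - inner ℂ (f s) (g s)) t y = 0 := by
      rw [hzero]; rfl
    rw [fderiv_fun_sub hp hq] at e1
    simp only [ContinuousLinearMap.sub_apply] at e1
    rw [fderiv_inner_apply ℂ hAfr hAgr y, fderiv_inner_apply ℂ hfr hgr y] at e1
    rw [Hgen _ hAfd y, Hgen _ hAgd y, Hgen _ hfd y, Hgen _ hgd y, hderivAf, hderivAg] at e1
    linear_combination e1
  have e1 := hE 1
  have e2 := hE Complex.I
  simp only [inner_smul_left, inner_smul_right, map_one, one_mul, Complex.conj_I] at e1 e2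
  have e2' : (inner ℂ (Ac (f t)) (Ac (deriv g t)) : ℂ) - inner ℂ (f t) (deriv g t)
      - ((inner ℂ (Ac (deriv f t)) (Ac (g t)) : ℂ) - inner ℂ (deriv f t) (g t)) = 0 := by
    have hh : Complex.I * ((inner ℂ (Ac (f t)) (Ac (deriv g t)) : ℂ) - inner ℂ (f t) (deriv g t)
        - ((inner ℂ (Ac (deriv f t)) (Ac (g t)) : ℂ) - inner ℂ (deriv f t) (g t))) = 0 := by
      linear_combination e2
    rcases mul_eq_zero.mp hh with h'' | h''
    · exact absurd h'' Complex.I_ne_zero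
    · exact h''
  constructor
  · linear_combination (e1 - e2') / 2
  · linear_combination (e1 + e2') / 2

/-- If `γ : 𝔻 → ℂ^d` is holomorphic on the open unit disc and the
linear map `A` preserves the norm of `γ(t)` for every `t ∈ 𝔻`, then `A` preserves
the norm of the tangent vector `γ'(0)`. -/
theorem stmt19 {d : ℕ} (γ : ℂ → Cd d)
    (hγ : DifferentiableOn ℂ γ (Metric.ball 0 1))
    (A : Cd d →ₗ[ℂ] Cd d)
    (hA : ∀ t ∈ Metric.ball (0 : ℂ) 1, ‖A (γ t)‖ = ‖γ t‖) :
    ‖A (deriv γ 0)‖ = ‖deriv γ 0‖ := by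
  set Ac : Cd d →L[ℂ] Cd d := LinearMap.toContinuousLinearMap A with hAc
  have hAcA : ∀ x, Ac x = A x := fun x => rfl
  have h0 : ∀ t ∈ ball (0:ℂ) 1, (inner ℂ (Ac (γ t)) (Ac (γ t)) : ℂ) = inner ℂ (γ t) (γ t) := by
    intro t ht
    rw [inner_self_eq_norm_sq_to_K, inner_self_eq_norm_sq_to_K, hAcA, hA t ht]
  have h1 := key_step Ac γ γ hγ hγ h0
  have hγ' : DifferentiableOn ℂ (deriv γ) (ball 0 1) :=
    ((hγ.analyticOnNhd isOpen_ball).deriv).differentiableOn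
  have h2 := key_step Ac γ (deriv γ) hγ hγ' (fun t ht => (h1 t ht).2)
  have h3 := (h2 0 (by simp)).1
  rw [inner_self_eq_norm_sq_to_K, inner_self_eq_norm_sq_to_K, hAcA] at h3
  have h4 : ‖A (deriv γ 0)‖ ^ 2 = ‖deriv γ 0‖ ^ 2 := by
    exact_mod_cast h3
  nlinarith [norm_nonneg (A (deriv γ 0)), norm_nonneg (deriv γ 0)]
end
end
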